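/- arXiv:1701.01580 — 10 statements merged into one kernel-verified Lean document; each statement's English description precedes it below -/
import Mathlib

section
/- For any nonempty word w over a finite alphabet Σ and any letter x in Σ, if wx is closed (i.e., wx has a border with no internal occurrence in wx), then wx has the same smallest period as w. -/
open scoped Classical

variable {α : Type*}

def IsBorder (u w : List α) : Prop := u <+: w ∧ u <:+ w ∧ u ≠ w

def InternalOcc (u w : List α) : Prop := ∃ p s : List α, p ≠ [] ∧ s ≠ [] ∧ w = p ++ u ++ s

def ClosedWord (w : List α) : Prop := w = [] ∨ ∃ u, IsBorder u w ∧ ¬ InternalOcc u w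

noncomputable def minPer (w : List α) : ℕ :=
  if w = [] then 1 else sInf {p | ∃ v, IsBorder v w ∧ p = w.length - v.length}

noncomputable def ocL (w : List α) : List ℕ :=
  (List.range w.length).map fun i => if ClosedWord (w.take (i+1)) then 1 else 0

def prefW (w : ℕ → α) (n : ℕ) : List α := (List.range n).map w

noncomputable def ocI (w : ℕ → α) : ℕ → ℕ := fun n =>
  if ClosedWord (prefW w (n+1)) then 1 else 0

def InfixAt (w : ℕ → α) (u : List α) (i : ℕ) : Prop :=
  u = (List.range u.length).map fun j => w (i + j)

def RecurrentWord (w : ℕ → α) : Prop :=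
  ∀ u : List α, (∃ i, InfixAt w u i) → ∀ N, ∃ i, N ≤ i ∧ InfixAt w u i

def UltPeriodic (s : ℕ → α) : Prop := ∃ p, 0 < p ∧ ∃ N, ∀ n, N ≤ n → s (n + p) = s n

def PerWord (s : ℕ → α) : Prop := ∃ p, 0 < p ∧ ∀ n, s (n + p) = s n

def OccurrenceAt (u w : List α) (i : ℕ) : Prop := i + u.length ≤ w.length ∧ u <+: w.drop i

def RepeatedIn (u w : List α) : Prop := ∃ i j, i < j ∧ OccurrenceAt u w i ∧ OccurrenceAt u w j

def CompleteReturnTo (w u : List α) : Prop :=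
  u <+: w ∧ u <:+ w ∧ u ≠ w ∧ ∀ i, OccurrenceAt u w i → i = 0 ∨ i = w.length - u.length

def BalancedWord (w : List Bool) : Prop :=
  ∀ u v : List Bool, u <:+: w → v <:+: w → u.length = v.length →
    ((u.count true : ℤ) - v.count true).natAbs ≤ 1

def RightSpecialSturmian (w : List Bool) : Prop := ∀ x : Bool, BalancedWord (w ++ [x])

def stdSeq (d : ℕ → ℕ) : ℕ → List Bool
  | 0 => [true]
  | 1 => [false]
  | n+2 => (List.replicate (d n) (stdSeq d (n+1))).flatten ++ stdSeq d n

def stdInf (d : ℕ → ℕ) : ℕ → Bool := fun i => (stdSeq d (i+2)).getD i false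

def IsStandardWord (s : List Bool) : Prop :=
  ∃ d : ℕ → ℕ, (∀ n, 1 ≤ n → 1 ≤ d n) ∧ ∃ m, s = stdSeq d m

def IsCentral (u : List Bool) : Prop := ∃ x y : Bool, x ≠ y ∧ IsStandardWord (u ++ [x, y])

def LeftSpecial (u w : List Bool) : Prop := (false :: u) <:+: w ∧ (true :: u) <:+: w

def RightSpecial (u w : List Bool) : Prop := (u ++ [false]) <:+: w ∧ (u ++ [true]) <:+: w

def IsSemicentral (v : List Bool) : Prop :=
  ∃ u : List Bool,
    (u <+: v ∧ RepeatedIn u v ∧ ∀ z, z <+: v → RepeatedIn z v → z.length ≤ u.length) ∧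
    (u <:+ v ∧ RepeatedIn u v ∧ ∀ z, z <:+ v → RepeatedIn z v → z.length ≤ u.length) ∧
    (LeftSpecial u v ∧ ∀ z, LeftSpecial z v → z.length ≤ u.length ∧ (z.length = u.length → z = u)) ∧
    (RightSpecial u v ∧ ∀ z, RightSpecial z v → z.length ≤ u.length ∧ (z.length = u.length → z = u))

def contFront : List ℕ → ℕ
  | [] => 1
  | [x] => x
  | x :: y :: l => x * contFront (y :: l) + contFront l

def paperK (l : List ℕ) : ℕ := contFront l.reverse

noncomputable def lbl (u : List α) : ℕ := sSup {n | ∃ v, IsBorder v u ∧ v.length = n}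

noncomputable def Bp (w : List α) (i : ℕ) : ℕ :=
  (Finset.range (i+1)).sup fun j => lbl (w.take j)

theorem stmt0 {α : Type*} [Fintype α] (w : List α) (hw : w ≠ []) (x : α)
    (h : ClosedWord (w ++ [x])) : minPer (w ++ [x]) = minPer w := by
  have hwx : w ++ [x] ≠ [] := by simp
  obtain h | ⟨u, ⟨hup, hus, hune⟩, huno⟩ := h
  · exact absurd h hwx
  -- u is nonempty
  obtain ⟨a, t, rfl⟩ : ∃ a t, w = a :: t := by
    cases w with
    | nil => exact absurd rfl hw
    | cons a t => exact ⟨a, t, rfl⟩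
  set w : List α := a :: t with hwdef
  have hune' : u ≠ [] := by
    rintro rfl
    exact huno ⟨[a], t ++ [x], by simp, by simp, by simp [hwdef]⟩
  -- u = u' ++ [x]
  obtain ⟨u', c, rfl⟩ : ∃ u' c, u = u' ++ [c] := by
    rcases List.eq_nil_or_concat u with h | ⟨L, b, h⟩
    · exact absurd h hune'
    · exact ⟨L, b, by simpa using h⟩
  have hul : (u' ++ [c]).length < (w ++ [x]).length :=
    lt_of_le_of_ne hup.length_le (fun hh => hune (hup.eq_of_length hh))
  have hul' : u'.length < w.length := by simpa using hul
  -- c = x and u' is a suffix of w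
  have hus2 := hus
  obtain ⟨t2, ht2⟩ := hus2
  rw [← List.append_assoc] at ht2
  obtain ⟨ht2a, ht2b⟩ := List.append_inj' ht2 rfl
  have hcx : c = x := by simpa using ht2b
  subst c
  have hu's : u' <:+ w := ⟨t2, ht2a⟩
  -- u' is a prefix of w
  have hu'p : u' <+: w := by
    rw [List.prefix_iff_eq_take]
    have h1 : u' <+: w ++ [x] := (List.prefix_append u' [x]).trans hup
    rw [List.prefix_iff_eq_take] at h1
    rwa [List.take_append_of_le_length (le_of_lt hul')] at h1
  have hu'b : IsBorder u' w :=
    ⟨hu'p, hu's, fun hh => absurd (congrArg List.length hh) (by omega)⟩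
  have hub : IsBorder (u' ++ [x]) (w ++ [x]) := ⟨hup, hus, hune⟩
  -- every border of w ++ [x] is at most as long as u
  have key1 : ∀ v, IsBorder v (w ++ [x]) → v.length ≤ u'.length + 1 := by
    rintro v ⟨hvp, hvs, hvne⟩
    by_contra hlen
    push_neg at hlen
    have husv : (u' ++ [x]) <:+ v := by
      rcases List.suffix_or_suffix_of_suffix hus hvs with h | h
      · exact h
      · have := h.length_le
        simp at this
        omega
    obtain ⟨t4, ht4⟩ := husv
    obtain ⟨s4, hs4⟩ := hvp
    refine huno ⟨t4, s4, ?_, ?_, ?_⟩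
    · rintro rfl
      simp at ht4
      subst ht4
      simp at hlen
    · rintro rfl
      simp at hs4
      exact hvne hs4
    · rw [← hs4, ← ht4]
  -- every border of w is at most as long as u'
  have key2 : ∀ v, IsBorder v w → v.length ≤ u'.length := by
    rintro v ⟨hvp, hvs, hvne⟩
    by_contra hlen
    push_neg at hlen
    have hupv : (u' ++ [x]) <+: v := by
      refine List.prefix_of_prefix_length_le hup (hvp.trans (List.prefix_append w [x])) ?_
      simp; omega
    obtain ⟨r, hr⟩ := hupv
    obtain ⟨t3, ht3⟩ := hvs
    refine huno ⟨t3, r ++ [x], ?_, by simp, ?_⟩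
    · rintro rfl
      simp at ht3
      exact hvne ht3
    · rw [← hr] at ht3
      rw [← ht3]
      simp
  -- compute both minimal periods
  have hS1 : minPer (w ++ [x]) = w.length + 1 - (u'.length + 1) := by
    rw [minPer, if_neg hwx]
    apply le_antisymm
    · apply Nat.sInf_le
      exact ⟨u' ++ [x], hub, by simp⟩
    · refine le_csInf ⟨_, u' ++ [x], hub, rfl⟩ ?_
      rintro b ⟨v, hv, rfl⟩
      have := key1 v hv
      simp
      omega
  have hS2 : minPer w = w.length - u'.length := by
    rw [minPer, if_neg hw]
    apply le_antisymm
    · exact Nat.sInf_le ⟨u', hu'b, rfl⟩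
    · refine le_csInf ⟨_, u', hu'b, rfl⟩ ?_
      rintro b ⟨v, hv, rfl⟩
      have := key2 v hv
      omega
  rw [hS1, hS2]
  omega
end

section
/- For every nonempty word w over a finite alphabet Σ, there exists at most one letter x in Σ such that wx is closed. -/
open scoped Classical

variable {α : Type*}

lemma suffix_getLast? {u v : List α} (h : u <:+ v) (hu : u ≠ []) :
    u.getLast? = v.getLast? := by
  obtain ⟨t, rfl⟩ := h
  exact (List.getLast?_append_of_ne_nil t hu).symm

lemma border_len_le {w u : List α} (x : α) (h : IsBorder u (w ++ [x])) :
    u.length ≤ w.length := by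
  obtain ⟨hp, -, hne⟩ := h
  have hle := hp.length_le
  have hlen : (w ++ [x]).length = w.length + 1 := by simp
  rcases Nat.lt_or_ge u.length (w.length + 1) with h1 | h1
  · omega
  · exact absurd (hp.eq_of_length (by omega)) hne

lemma border_lt_case {w u v : List α} (x y : α)
    (hub : IsBorder u (w ++ [x])) (hni : ¬ InternalOcc u (w ++ [x]))
    (hvb : IsBorder v (w ++ [y])) (hlt : u.length < v.length) : False := by
  obtain ⟨hup, hus, hune⟩ := hub
  obtain ⟨hvp, hvs, hvne⟩ := hvb
  have hm : v.length ≤ w.length := border_len_le y ⟨hvp, hvs, hvne⟩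
  -- u is a prefix of v
  have huv : u <+: v := by
    have huw : u <+: w :=
      List.prefix_of_prefix_length_le hup (List.prefix_append w [x]) (by omega)
    have hvw : v <+: w :=
      List.prefix_of_prefix_length_le hvp (List.prefix_append w [y]) (by omega)
    exact List.prefix_of_prefix_length_le huw hvw (by omega)
  obtain ⟨r, hr⟩ := huv
  obtain ⟨t, ht⟩ := hvs
  have htne : t ≠ [] := by
    intro h; subst h
    simp only [List.nil_append] at ht
    exact hvne ht
  have hrne : r ≠ [] := by
    intro h; subst h
    simp only [List.append_nil] at hr
    rw [← hr] at hlt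
    omega
  have hry : r.getLast? = some y := by
    have : r <:+ w ++ [y] := by
      refine ⟨t ++ u, ?_⟩
      rw [List.append_assoc, hr, ht]
    rw [suffix_getLast? this hrne, List.getLast?_append_of_ne_nil w (by simp)]
    simp
  have hrdl : r = r.dropLast ++ [y] := by
    conv_lhs => rw [← List.dropLast_append_getLast hrne]
    congr 1
    have := List.getLast?_eq_getLast hrne
    rw [this] at hry
    simpa using hry
  have hw' : w = t ++ u ++ r.dropLast := by
    have : (t ++ u ++ r.dropLast) ++ [y] = w ++ [y] := by
      rw [← ht, ← hr, hrdl]; simp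
    have h2 := congrArg List.dropLast this
    simpa using h2.symm
  exact hni ⟨t, r.dropLast ++ [x], htne, by simp, by rw [hw']; simp⟩

theorem stmt1 {α : Type*} [Fintype α] (w : List α) (hw : w ≠ []) (x y : α)
    (hx : ClosedWord (w ++ [x])) (hy : ClosedWord (w ++ [y])) : x = y := by
  rcases hx with hx | ⟨u, hub, hun⟩
  · simp at hx
  rcases hy with hy | ⟨v, hvb, hvn⟩
  · simp at hy
  obtain ⟨c, t, hct⟩ : ∃ c t, w = c :: t := by
    cases w with
    | nil => exact absurd rfl hw
    | cons c t => exact ⟨c, t, rfl⟩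
  have hune : u ≠ [] := by
    intro h; subst h
    exact hun ⟨[c], t ++ [x], by simp, by simp, by rw [hct]; simp⟩
  rcases lt_trichotomy u.length v.length with h | h | h
  · exact absurd (border_lt_case x y hub hun hvb h) not_false
  · -- equal lengths: u = v
    have hul : u.length ≤ w.length := border_len_le x hub
    have huw : u = w.take u.length := by
      have h2 := List.prefix_iff_eq_take.mp hub.1
      rwa [List.take_append_of_le_length hul] at h2
    have hvw : v = w.take u.length := by
      have h2 := List.prefix_iff_eq_take.mp hvb.1
      rwa [← h, List.take_append_of_le_length hul] at h2
    have huv : u = v := huw.trans hvw.symm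
    have hx' : u.getLast? = some x := by
      rw [suffix_getLast? hub.2.1 hune, List.getLast?_append_of_ne_nil w (by simp)]
      simp
    have hy' : u.getLast? = some y := by
      rw [huv, suffix_getLast? hvb.2.1 (huv ▸ hune),
        List.getLast?_append_of_ne_nil w (by simp)]
      simp
    rw [hx'] at hy'
    exact Option.some_injective _ hy'
  · exact absurd (border_lt_case y x hvb hvn hub h) not_false
end

section
/- Let w be a closed word and x a letter. Then wx is closed if and only if wx has the same smallest period as w. -/
open scoped Classical

variable {α : Type*}

section Aux
variable {α : Type*}

lemma aux_border_ne_nil {u w : List α} (h : IsBorder u w) : w ≠ [] := by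
  rintro rfl
  exact h.2.2 (List.prefix_nil.mp h.1)

lemma aux_border_length_lt {u w : List α} (h : IsBorder u w) : u.length < w.length := by
  rcases h with ⟨hp, _, hne⟩
  rcases lt_or_eq_of_le hp.length_le with h | h
  · exact h
  · exact absurd (hp.eq_of_length h) hne

lemma aux_longest {u w : List α} (hu : IsBorder u w) (hnu : ¬ InternalOcc u w)
    {z : List α} (hz : IsBorder z w) : z.length ≤ u.length := by
  by_contra hlt
  push_neg at hlt
  have huz : u <+: z := List.prefix_of_prefix_length_le hu.1 hz.1 hlt.le
  have huz' : u <:+ z := List.suffix_of_suffix_length_le hu.2.1 hz.2.1 hlt.le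
  obtain ⟨r, hr⟩ := huz'
  obtain ⟨t, ht⟩ := hz.1
  apply hnu
  refine ⟨r, t, ?_, ?_, ?_⟩
  · intro h; subst h; simp at hr; subst hr; exact absurd rfl hlt.ne
  · intro h; subst h; simp at ht; exact hz.2.2 ht
  · rw [← ht, ← hr, List.append_assoc]

lemma aux_minPer_eq {u w : List α} (hu : IsBorder u w) (hnu : ¬ InternalOcc u w) :
    minPer w = w.length - u.length := by
  rw [minPer, if_neg (aux_border_ne_nil hu)]
  apply le_antisymm
  · exact Nat.sInf_le ⟨u, hu, rfl⟩
  · refine le_csInf ⟨w.length - u.length, u, hu, rfl⟩ ?_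
    rintro b ⟨v, hv, rfl⟩
    exact Nat.sub_le_sub_left (aux_longest hu hnu hv) _

lemma aux_minPer_attained {w : List α} (hw : w ≠ []) :
    ∃ v, IsBorder v w ∧ v.length = w.length - minPer w ∧ minPer w = w.length - v.length := by
  have hne : {p | ∃ v, IsBorder v w ∧ p = w.length - v.length}.Nonempty :=
    ⟨w.length, [], ⟨List.nil_prefix, List.nil_suffix, fun h => hw h.symm⟩, by simp⟩
  have := Nat.sInf_mem hne
  obtain ⟨v, hv, hlen⟩ := this
  rw [minPer, if_neg hw]
  refine ⟨v, hv, ?_, hlen⟩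
  rw [hlen]
  have := (aux_border_length_lt hv).le
  omega

end Aux

theorem stmt2 {α : Type*} (w : List α) (h : ClosedWord w) (x : α) :
    ClosedWord (w ++ [x]) ↔ minPer (w ++ [x]) = minPer w := by
  rcases eq_or_ne w [] with rfl | hw
  · have hb : IsBorder ([] : List α) [x] := ⟨List.nil_prefix, List.nil_suffix, by simp⟩
    have hn : ¬ InternalOcc ([] : List α) [x] := by
      rintro ⟨p, s, hp, hs, hps⟩
      have hlen := congrArg List.length hps
      simp only [List.length_append, List.length_singleton, List.length_nil] at hlen
      have h1 := List.length_pos_iff.mpr hp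
      have h2 := List.length_pos_iff.mpr hs
      omega
    constructor
    · intro _
      simp only [List.nil_append]
      rw [aux_minPer_eq hb hn]
      simp [minPer]
    · intro _
      exact Or.inr ⟨[], hb, hn⟩
  · -- w ≠ []
    obtain ⟨u, hu, hnu⟩ := h.resolve_left hw
    have hulen : u.length < w.length := aux_border_length_lt hu
    have hminw : minPer w = w.length - u.length := aux_minPer_eq hu hnu
    have hwx : w ++ [x] ≠ [] := by simp
    constructor
    · -- closed → equal periods
      intro hc
      obtain ⟨v, hv, hnv⟩ := hc.resolve_left hwx
      have hvne : v ≠ [] := by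
        rintro rfl
        apply hnv
        obtain ⟨a, t, rfl⟩ := List.exists_cons_of_ne_nil hw
        exact ⟨[a], t ++ [x], by simp, by simp, by simp⟩
      have hvlen : v.length < w.length + 1 := by
        simpa using aux_border_length_lt hv
      have hvw : v <+: w :=
        List.prefix_of_prefix_length_le hv.1 (w.prefix_append [x]) (by omega)
      -- v.dropLast is a border of w
      obtain ⟨r, hr⟩ := hv.2.1
      have hv' : v = v.dropLast ++ [v.getLast hvne] := (List.dropLast_append_getLast hvne).symm
      have hkey : (r ++ v.dropLast) ++ [v.getLast hvne] = w ++ [x] := by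
        rw [List.append_assoc, ← hv', hr]
      obtain ⟨hrd, -⟩ := List.append_inj' hkey rfl
      have hvpos : 0 < v.length := List.length_pos_iff.mpr hvne
      have hdlen : v.dropLast.length = v.length - 1 := by simp
      have hbdl : IsBorder v.dropLast w := by
        refine ⟨(List.dropLast_prefix v).trans hvw, ⟨r, hrd⟩, ?_⟩
        intro heq
        have := congrArg List.length heq
        omega
      have hdl := aux_longest hu hnu hbdl
      have hvle : v.length ≤ u.length + 1 := by omega
      have hvgt : ¬ v.length ≤ u.length := by
        intro hle
        have hvu : v <+: u := List.prefix_of_prefix_length_le hvw hu.1 hle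
        obtain ⟨t, ht⟩ := hvu
        obtain ⟨r2, hr2⟩ := hu.2.1
        apply hnv
        refine ⟨r2, t ++ [x], ?_, by simp, ?_⟩
        · intro h
          have := congrArg List.length hr2
          simp [h] at this
          omega
        · rw [← hr2, ← ht]
          simp
      have hveq : v.length = u.length + 1 := by omega
      rw [aux_minPer_eq hv hnv, hminw]
      simp only [List.length_append, List.length_singleton]
      omega
    · -- equal periods → closed
      intro hper
      obtain ⟨v, hv, hvl, _⟩ := aux_minPer_attained hwx
      rw [hper, hminw] at hvl
      simp only [List.length_append, List.length_singleton] at hvl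
      have hvlen : v.length = u.length + 1 := by omega
      have huv : u <+: v :=
        List.prefix_of_prefix_length_le (hu.1.trans (w.prefix_append [x])) hv.1 (by omega)
      have hux : u ++ [x] <:+ w ++ [x] := by
        obtain ⟨r, hr⟩ := hu.2.1
        exact ⟨r, by rw [← List.append_assoc, hr]⟩
      have hveq : v = u ++ [x] := by
        have : v <:+ u ++ [x] :=
          List.suffix_of_suffix_length_le hv.2.1 hux (by simp [hvlen])
        exact this.eq_of_length (by simp [hvlen])
      refine Or.inr ⟨v, hv, ?_⟩
      rintro ⟨P, S, hP, hS, hPS⟩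
      obtain ⟨S', c, rfl⟩ := S.eq_nil_or_concat.resolve_left hS
      rw [hveq] at hPS
      have : w ++ [x] = (P ++ (u ++ [x]) ++ S') ++ [c] := by
        rw [hPS]; simp
      obtain ⟨hw', hx'⟩ := List.append_inj' this rfl
      apply hnu
      exact ⟨P, [x] ++ S', hP, by simp, by rw [hw']; simp⟩
end

section
/- Every finite word whose exponent is at least 2 (i.e., whose length is at least twice its minimal period) is closed. -/
open scoped Classical

variable {α : Type*}

theorem stmt4 {α : Type*} (w : List α) (h : 2 * minPer w ≤ w.length) : ClosedWord w := by
  rcases eq_or_ne w [] with hw | hw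
  · exact Or.inl hw
  set n := w.length with hn
  have hn0 : 0 < n := List.length_pos_iff.mpr hw
  set S : Set ℕ := {p | ∃ v, IsBorder v w ∧ p = w.length - v.length} with hS
  have hmin : minPer w = sInf S := by simp [minPer, hw, hS]
  have hSne : S.Nonempty := ⟨n, [], ⟨⟨w, rfl⟩, ⟨w, by simp⟩, Ne.symm hw⟩, by simp [hn]⟩
  set p := sInf S with hp
  obtain ⟨v₀, hv₀b, hv₀len⟩ : p ∈ S := Nat.sInf_mem hSne
  have hvlt : v₀.length < n := by
    rcases hv₀b.1 with ⟨t, ht⟩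
    have hlt := congrArg List.length ht
    simp [hn] at hlt
    rcases Nat.lt_or_ge v₀.length n with h' | h'
    · exact h'
    · exfalso
      have ht0 : t = [] := by
        have : t.length = 0 := by omega
        simpa using this
      exact hv₀b.2.2 (by simp [ht0] at ht; simp [ht])
  have hvlen : v₀.length = n - p := by omega
  have hp1 : 1 ≤ p := by omega
  have hpn : 2 * p ≤ n := by rwa [hmin] at h
  have hvt : v₀ = w.take (n - p) := by
    have := List.prefix_iff_eq_take.mp hv₀b.1
    rwa [hvlen] at this
  have hvd : v₀ = w.drop p := by
    have := List.suffix_iff_eq_drop.mp hv₀b.2.1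
    rw [hvlen] at this
    rw [this]
    congr 1
    omega
  have htd : w.take (n - p) = w.drop p := hvt.symm.trans hvd
  have per : ∀ j, j + p < n → w[j]? = w[j + p]? := by
    intro j hj
    have e := congrArg (fun l => l[j]?) htd
    simp only [List.getElem?_take, List.getElem?_drop] at e
    rw [if_pos (by omega)] at e
    rw [e]
    congr 1
    omega
  refine Or.inr ⟨v₀, hv₀b, ?_⟩
  rintro ⟨a, b, ha, hb, hab⟩
  set i := a.length with hi
  have hi0 : 0 < i := List.length_pos_iff.mpr ha
  have hlen : i + v₀.length + b.length = n := by
    have := congrArg List.length hab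
    simp [hn] at this
    omega
  have hip : i < p := by
    have := List.length_pos_iff.mpr hb
    omega
  have occ : ∀ j, j < n - p → w[i + j]? = w[j]? := by
    intro j hj
    have e1 : w[i + j]? = v₀[j]? := by
      conv_lhs => rw [hab, List.append_assoc]
      rw [List.getElem?_append_right (by omega)]
      rw [List.getElem?_append, if_pos (by omega)]
      congr 1
      omega
    have e2 : v₀[j]? = w[j]? := by
      rw [hvt, List.getElem?_take, if_pos (by omega)]
    rw [e1, e2]
  have key : ∀ j, i + j < n → w[j]? = w[i + j]? := by
    intro j
    induction j using Nat.strong_induction_on with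
    | _ j ih =>
      intro hj
      by_cases hc : j < n - p
      · exact (occ j hc).symm
      · have hge : n - p ≤ j := le_of_not_gt hc
        have e1 : w[j]? = w[(j - p) + p]? := by congr 1; omega
        have e2 : w[i + j]? = w[(i + (j - p)) + p]? := by congr 1; omega
        rw [e1, e2, ← per (j - p) (by omega), ← per (i + (j - p)) (by omega)]
        exact ih (j - p) (by omega) (by omega)
  have hdt : w.drop i = w.take (n - i) := by
    apply List.ext_getElem?
    intro j
    rw [List.getElem?_drop, List.getElem?_take]
    by_cases hc : j < n - i
    · rw [if_pos hc]
      exact (key j (by omega)).symm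
    · rw [if_neg hc]
      exact List.getElem?_eq_none (by omega)
  have hib : IsBorder (w.take (n - i)) w := by
    refine ⟨List.take_prefix _ _, ?_, ?_⟩
    · rw [← hdt]; exact List.drop_suffix _ _
    · intro hcon
      have := congrArg List.length hcon
      simp [hn] at this
      omega
  have hiS : i ∈ S := ⟨w.take (n - i), hib, by simp [hn]; omega⟩
  have : p ≤ i := Nat.sInf_le hiS
  omega
end

section
/- If w is a finite word admitting a border of length ℓ, then the number of 1s in the oc-sequence of w is at least ℓ+1. -/
open scoped Classical

variable {α : Type*}

lemma count_ones_aux (N : ℕ) (P : ℕ → Prop) :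
    ((List.range N).map fun i => if P i then (1:ℕ) else 0).count 1 =
      ((Finset.range N).filter P).card := by
  rw [List.count_eq_countP, List.countP_map, Finset.card_filter]
  induction N with
  | zero => simp
  | succ n ih =>
      rw [List.range_succ, List.countP_append, ih, Finset.sum_range_succ]
      simp only [add_left_cancel_iff]
      split <;> simp [List.countP, List.countP.go, Function.comp, *]

lemma border_length_lt {α : Type*} {u t : List α} (h : IsBorder u t) :
    u.length < t.length := by
  obtain ⟨hp, hs, hne⟩ := h
  exact Nat.lt_of_le_of_ne hp.length_le (fun he => hne (hp.eq_of_length he))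

lemma no_border_nil {α : Type*} (u : List α) : ¬ IsBorder u ([] : List α) := by
  rintro ⟨hp, -, hne⟩
  exact hne (List.prefix_nil.mp hp)

theorem stmt5 {α : Type*} (w : List α) (ℓ : ℕ) (h : ∃ v, IsBorder v w ∧ v.length = ℓ) :
    ℓ + 1 ≤ (ocL w).count 1 := by
  classical
  obtain ⟨v, hv, hvl⟩ := h
  set N := w.length with hN
  have hlN : ℓ < N := by
    have := border_length_lt hv; omega
  have hex : ∀ k : ℕ, ∃ n, ∃ u, IsBorder u (w.take n) ∧ min k ℓ ≤ u.length := by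
    intro k
    exact ⟨N, v, by rw [hN, List.take_length]; exact hv, by omega⟩
  set F : ℕ → ℕ := fun k => Nat.find (hex k) with hF
  have hFspec : ∀ k, ∃ u, IsBorder u (w.take (F k)) ∧ min k ℓ ≤ u.length :=
    fun k => Nat.find_spec (hex k)
  have hFmin : ∀ k m, m < F k → ¬ ∃ u, IsBorder u (w.take m) ∧ min k ℓ ≤ u.length :=
    fun k m hm => Nat.find_min (hex k) hm
  have hFle : ∀ k, F k ≤ N := by
    intro k
    exact Nat.find_le ⟨v, by rw [hN, List.take_length]; exact hv, by omega⟩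
  have hF1 : ∀ k, 1 ≤ F k := by
    intro k
    by_contra h'
    have h0 : F k = 0 := by omega
    obtain ⟨u, hu, -⟩ := hFspec k
    rw [h0, List.take_zero] at hu
    exact no_border_nil u hu
  -- each w.take (F k) is closed
  have hclosed : ∀ k, ClosedWord (w.take (F k)) := by
    intro k
    obtain ⟨u, hu, hku⟩ := hFspec k
    refine Or.inr ⟨u, hu, ?_⟩
    rintro ⟨p, s, hp, hs, he⟩
    have hlen : (w.take (F k)).length = F k := by
      have := hFle k; simp only [List.length_take]; omega
    have hslen : 1 ≤ s.length := List.length_pos_iff.mpr hs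
    have hplen : 1 ≤ p.length := List.length_pos_iff.mpr hp
    have hlens : p.length + u.length + s.length = F k := by
      have := congrArg List.length he
      simp only [List.length_append] at this
      omega
    apply hFmin k (p.length + u.length) (by omega)
    have htake : w.take (p.length + u.length) = p ++ u := by
      have h1 : w.take (p.length + u.length) = (w.take (F k)).take (p.length + u.length) := by
        rw [List.take_take, min_eq_left (by omega)]
      rw [h1, he, ← List.length_append (as := p) (bs := u), List.take_left]
    refine ⟨u, ⟨?_, ?_, ?_⟩, hku⟩
    · rw [List.prefix_take_iff]
      exact ⟨hu.1.trans (List.take_prefix _ w), by omega⟩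
    · rw [htake]; exact List.suffix_append p u
    · intro hcon
      rw [htake] at hcon
      have := congrArg List.length hcon
      simp only [List.length_append] at this
      omega
  have hFmono : ∀ k j, k ≤ j → F k ≤ F j := by
    intro k j hkj
    apply Nat.find_mono
    rintro n ⟨u, hu, hl⟩
    exact ⟨u, hu, le_trans (by omega) hl⟩
  have hFstrict : ∀ k j, k < j → j ≤ ℓ → F k < F j := by
    intro k j hkj hjl
    rcases Nat.lt_or_ge (F k) (F j) with h' | h'
    · exact h'
    have heq : F k = F j := le_antisymm (hFmono k j hkj.le) h'
    exfalso
    obtain ⟨u, hu, hl⟩ := hFspec j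
    have hjlen : j ≤ u.length := by
      rwa [min_eq_left hjl] at hl
    have hulen : u.length < F j := by
      have := border_length_lt hu
      have h2 : (w.take (F j)).length = F j := by have := hFle j; simp only [List.length_take]; omega
      omega
    have hune : u ≠ [] := by
      intro hcon; rw [hcon] at hjlen; simp at hjlen; omega
    apply hFmin k (F j - 1) (by omega)
    obtain ⟨t, ht⟩ := hu.2.1
    have htake : w.take (F j - 1) = t ++ u.dropLast := by
      have h1 : w.take (F j - 1) = (w.take (F j)).dropLast := by
        rw [List.dropLast_eq_take]
        rw [List.take_take]
        congr 1
        have := hFle j; simp only [List.length_take]; omega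
      rw [h1, ← ht, List.dropLast_append_of_ne_nil hune]
    have hdll : u.dropLast.length = u.length - 1 := List.length_dropLast (xs := u)
    refine ⟨u.dropLast, ⟨?_, ?_, ?_⟩, ?_⟩
    · rw [List.prefix_take_iff]
      refine ⟨(List.dropLast_prefix u).trans (hu.1.trans (List.take_prefix _ w)), by omega⟩
    · rw [htake]; exact List.suffix_append t u.dropLast
    · intro hcon
      have h3 := congrArg List.length hcon
      rw [hdll, List.length_take] at h3
      have h4 := hFle j
      omega
    · omega
  -- counting
  have hcount : (ocL w).count 1 =
      ((Finset.range N).filter (fun i => ClosedWord (w.take (i+1)))).card := by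
    rw [ocL, ← hN]
    exact count_ones_aux N _
  rw [hcount]
  have hsub : (Finset.range (ℓ+1)).image (fun k => F k - 1) ⊆
      (Finset.range N).filter (fun i => ClosedWord (w.take (i+1))) := by
    intro i hi
    simp only [Finset.mem_image, Finset.mem_range] at hi
    obtain ⟨k, hk, rfl⟩ := hi
    simp only [Finset.mem_filter, Finset.mem_range]
    constructor
    · have := hFle k; have := hF1 k; omega
    · have h1 : F k - 1 + 1 = F k := by have := hF1 k; omega
      rw [h1]; exact hclosed k
  have hcard : ((Finset.range (ℓ+1)).image (fun k => F k - 1)).card = ℓ + 1 := by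
    rw [Finset.card_image_of_injOn, Finset.card_range]
    intro k hk j hj hkj
    simp only [Finset.mem_coe, Finset.mem_range] at hk hj
    by_contra hne
    have hkj' : F k - 1 = F j - 1 := hkj
    rcases Nat.lt_or_ge k j with h' | h'
    · have := hFstrict k j h' (by omega)
      have := hF1 k; omega
    · have hj' : j < k := by omega
      have := hFstrict j k hj' (by omega)
      have := hF1 j; omega
  calc ℓ + 1 = ((Finset.range (ℓ+1)).image (fun k => F k - 1)).card := hcard.symm
    _ ≤ _ := Finset.card_le_card hsub
end

section
/- The period of a nonempty closed word w equals 1 plus the number of 0s in the oc-sequence of w; equivalently, a closed word w is a complete return to its prefix of length |oc(w)|₁ − 1. -/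
open scoped Classical

variable {α : Type*}

-- auxiliary development
def RepPref (w : List α) (k : ℕ) : Prop :=
  ∃ i, 0 < i ∧ i + k ≤ w.length ∧ w.take k <+: w.drop i

noncomputable def lrp (w : List α) : ℕ := Nat.findGreatest (RepPref w) w.length

lemma repPref_lt {w : List α} {k : ℕ} (h : RepPref w k) : k < w.length := by
  obtain ⟨i, hi, h1, -⟩ := h; omega

lemma repPref_zero {w : List α} (hw : w ≠ []) : RepPref w 0 :=
  ⟨w.length, List.length_pos_iff.mpr hw, by omega, by simp⟩

lemma lrp_rep {w : List α} (hw : w ≠ []) : RepPref w (lrp w) :=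
  Nat.findGreatest_spec (Nat.zero_le _) (repPref_zero hw)

lemma lrp_lt {w : List α} (hw : w ≠ []) : lrp w < w.length := repPref_lt (lrp_rep hw)

lemma le_lrp {w : List α} {k : ℕ} (h : RepPref w k) : k ≤ lrp w :=
  Nat.le_findGreatest (le_of_lt (repPref_lt h)) h

lemma take_prefix_take {w : List α} {j k : ℕ} (hjk : j ≤ k) : w.take j <+: w.take k := by
  have h := List.take_prefix j (w.take k)
  rwa [List.take_take, min_eq_left hjk] at h

lemma border_le_lrp {v w : List α} (h : IsBorder v w) : v.length ≤ lrp w := by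
  obtain ⟨hp, hs, hne⟩ := h
  have hlt : v.length < w.length := by
    rcases lt_or_eq_of_le hp.length_le with h' | h'
    · exact h'
    · exact absurd (hp.eq_of_length h') hne
  apply le_lrp
  refine ⟨w.length - v.length, by omega, by omega, ?_⟩
  rw [← List.suffix_iff_eq_drop.mp hs]
  exact List.prefix_iff_eq_take.mp hp ▸ List.prefix_rfl

lemma internal_of_occ {v w : List α} {i : ℕ} (hi : 0 < i) (hlt : i + v.length < w.length)
    (hp : v <+: w.drop i) : InternalOcc v w := by
  obtain ⟨t, ht⟩ := hp
  refine ⟨w.take i, t, ?_, ?_, ?_⟩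
  · have : (w.take i).length = min i w.length := List.length_take
    intro hnil; rw [hnil] at this; simp at this; omega
  · have hlen : v.length + t.length = w.length - i := by
      have := congrArg List.length ht
      simp at this; omega
    intro hnil; rw [hnil] at hlen; simp at hlen; omega
  · rw [List.append_assoc, ht, List.take_append_drop]

-- from an occurrence strictly inside u++[a] at positive position, get RepPref u k
lemma repPref_of_occ_append {u : List α} {a : α} {i k : ℕ} (hi : 0 < i)
    (hik : i + k ≤ u.length) (hp : (u ++ [a]).take k <+: (u ++ [a]).drop i) : RepPref u k := by
  have hk : k ≤ u.length := by omega
  have hiu : i ≤ u.length := by omega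
  rw [List.take_append_of_le_length hk, List.drop_append_of_le_length hiu] at hp
  have hlen : (u.take k).length ≤ (u.drop i).length := by
    rw [List.length_take, List.length_drop]; omega
  have hp' : u.take k <+: u.drop i := by
    rw [List.prefix_iff_eq_take] at hp ⊢
    rwa [List.take_append_of_le_length hlen] at hp
  exact ⟨i, hi, hik, hp'⟩

lemma repPref_append {u : List α} (a : α) {k : ℕ} (h : RepPref u k) : RepPref (u ++ [a]) k := by
  obtain ⟨i, hi, hle, hp⟩ := h
  have hk : k ≤ u.length := by omega
  have hiu : i ≤ u.length := by omega
  refine ⟨i, hi, by simp; omega, ?_⟩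
  rw [List.take_append_of_le_length hk, List.drop_append_of_le_length hiu]
  exact hp.trans (List.prefix_append _ _)

lemma lrp_le_append {u : List α} (hu : u ≠ []) (a : α) : lrp u ≤ lrp (u ++ [a]) :=
  le_lrp (repPref_append a (lrp_rep hu))

lemma lrp_append_le (u : List α) (a : α) : lrp (u ++ [a]) ≤ lrp u + 1 := by
  by_cases h0 : lrp (u ++ [a]) = 0
  · omega
  · have hne : (u : List α) ++ [a] ≠ [] := by simp
    have hrep := lrp_rep hne
    obtain ⟨i, hi, hle, hp⟩ := hrep
    have hlen : (u ++ [a]).length = u.length + 1 := by simp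
    -- occurrence of take (lrp w) with lrp w = (lrp w - 1) + 1
    have hk : lrp (u ++ [a]) - 1 + 1 = lrp (u ++ [a]) := by omega
    have hik : i + (lrp (u ++ [a]) - 1) ≤ u.length := by omega
    have hp' : (u ++ [a]).take (lrp (u ++ [a]) - 1) <+: (u ++ [a]).drop i :=
      (take_prefix_take (by omega)).trans hp
    have := le_lrp (repPref_of_occ_append hi hik hp')
    omega

lemma closed_of_lrp_succ {u : List α} (hu : u ≠ []) (a : α)
    (h : lrp (u ++ [a]) = lrp u + 1) : ClosedWord (u ++ [a]) := by
  set k := lrp u with hkdef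
  have hne : (u : List α) ++ [a] ≠ [] := by simp
  obtain ⟨i, hi, hle, hp⟩ := lrp_rep hne
  rw [h] at hp hle
  have hlen : (u ++ [a]).length = u.length + 1 := by simp
  have hklt : k < u.length := lrp_lt hu
  -- i must be at the very end
  have hiend : i + (k + 1) = u.length + 1 := by
    by_contra hcon
    have hik : i + (k + 1) ≤ u.length := by omega
    have := le_lrp (repPref_of_occ_append hi hik hp)
    omega
  refine Or.inr ⟨(u ++ [a]).take (k + 1), ⟨List.take_prefix _ _, ?_, ?_⟩, ?_⟩
  · -- suffix
    have hdl : ((u ++ [a]).drop i).length = k + 1 := by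
      rw [List.length_drop]; omega
    have htl : ((u ++ [a]).take (k + 1)).length = k + 1 := by
      rw [List.length_take]; simp; omega
    have := hp.eq_of_length (by rw [htl, hdl])
    rw [this]; exact List.drop_suffix _ _
  · -- ne
    intro hEq
    have := congrArg List.length hEq
    rw [List.length_take] at this; simp at this; omega
  · -- no internal occurrence
    rintro ⟨p, s, hpne, hsne, heq⟩
    have hslen : 0 < s.length := List.length_pos_iff.mpr hsne
    have hplen : 0 < p.length := List.length_pos_iff.mpr hpne
    have htl : ((u ++ [a]).take (k + 1)).length = k + 1 := by
      rw [List.length_take]; simp; omega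
    have hlens := congrArg List.length heq
    simp only [List.length_append, htl] at hlens
    rw [List.length_singleton] at hlens
    have hdropp : (u ++ [a]).drop p.length = (u ++ [a]).take (k + 1) ++ s := by
      conv_lhs => rw [heq, List.append_assoc]
      exact List.drop_left
    have hocc : (u ++ [a]).take (k + 1) <+: (u ++ [a]).drop p.length :=
      hdropp ▸ List.prefix_append _ _
    have hik : p.length + (k + 1) ≤ u.length := by omega
    have := le_lrp (repPref_of_occ_append hplen hik hocc)
    omega

lemma frontier_len {w : List α} (hw : w ≠ []) {v : List α}
    (hb : IsBorder v w) (hni : ¬ InternalOcc v w) : v.length = lrp w := by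
  refine le_antisymm (border_le_lrp hb) ?_
  by_contra hcon
  push_neg at hcon
  obtain ⟨i, hi, hle, hp⟩ := lrp_rep hw
  have hv : v = w.take v.length := List.prefix_iff_eq_take.mp hb.1
  have hvp : v <+: w.drop i := by
    rw [hv]; exact (take_prefix_take (le_of_lt hcon)).trans hp
  exact hni (internal_of_occ hi (by omega) hvp)

lemma closed_lrp_succ {u : List α} (hu : u ≠ []) (a : α)
    (h : ClosedWord (u ++ [a])) : lrp (u ++ [a]) = lrp u + 1 := by
  have hne : (u : List α) ++ [a] ≠ [] := by simp
  rcases h with h | ⟨v, hb, hni⟩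
  · exact absurd h hne
  have hvl := frontier_len hne hb hni
  refine le_antisymm (lrp_append_le u a) ?_
  by_contra hcon
  push_neg at hcon
  have hvk : v.length ≤ lrp u := by omega
  obtain ⟨j, hj, hjk, hp⟩ := lrp_rep hu
  have hju : j ≤ u.length := by omega
  have hv : v = u.take v.length := by
    have h1 := List.prefix_iff_eq_take.mp hb.1
    rwa [List.take_append_of_le_length (by omega)] at h1
  have hvocc : v <+: (u ++ [a]).drop j := by
    rw [List.drop_append_of_le_length hju, hv]
    exact ((take_prefix_take hvk).trans hp).trans (List.prefix_append _ _)
  refine hni (internal_of_occ hj ?_ hvocc)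
  simp; omega

lemma frontier_ex {w : List α} (hw : w ≠ []) (h : ClosedWord w) :
    ∃ v, IsBorder v w ∧ ¬ InternalOcc v w ∧ v.length = lrp w := by
  rcases h with h | ⟨v, hb, hni⟩
  · exact absurd h hw
  · exact ⟨v, hb, hni, frontier_len hw hb hni⟩

lemma closed_singleton (a : α) : ClosedWord [a] := by
  refine Or.inr ⟨[], ⟨List.nil_prefix, List.nil_suffix, by simp⟩, ?_⟩
  rintro ⟨p, s, hp, hs, heq⟩
  have := congrArg List.length heq
  simp at this
  have := List.length_pos_iff.mpr hp
  have := List.length_pos_iff.mpr hs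
  omega

lemma lrp_singleton (a : α) : lrp [a] = 0 := by
  have := lrp_lt (w := [a]) (by simp)
  simpa using this

lemma ocL_append (u : List α) (a : α) :
    ocL (u ++ [a]) = ocL u ++ [if ClosedWord (u ++ [a]) then 1 else 0] := by
  unfold ocL
  rw [List.length_append, List.length_singleton, List.range_succ, List.map_append]
  congr 1
  · apply List.map_congr_left
    intro i hi
    rw [List.mem_range] at hi
    rw [List.take_append_of_le_length (by omega)]
  · simp only [List.map_cons, List.map_nil]
    congr 2
    rw [show u.length + 1 = (u ++ [a]).length by simp, List.take_length]

lemma count_one_ocL (w : List α) (hw : w ≠ []) : (ocL w).count 1 = lrp w + 1 := by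
  induction w using List.reverseRecOn with
  | nil => exact absurd rfl hw
  | append_singleton u a ih =>
    by_cases hu : u = []
    · subst hu
      simp only [List.nil_append]
      rw [show ocL [a] = [1] by
        unfold ocL; simp [closed_singleton a]]
      simp [lrp_singleton]
    · rw [ocL_append, List.count_append, ih hu]
      by_cases hC : ClosedWord (u ++ [a])
      · rw [if_pos hC, closed_lrp_succ hu a hC]
        simp
      · rw [if_neg hC]
        have h1 := lrp_le_append hu a
        have h2 := lrp_append_le u a
        have h3 : lrp (u ++ [a]) ≠ lrp u + 1 := fun h => hC (closed_of_lrp_succ hu a h)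
        simp
        omega

lemma count_zero_one (l : List ℕ) (h : ∀ x ∈ l, x = 0 ∨ x = 1) :
    l.count 0 + l.count 1 = l.length := by
  induction l with
  | nil => simp
  | cons x t ih =>
    have hx := h x (by simp)
    have ht := ih (fun y hy => h y (by simp [hy]))
    rcases hx with hx | hx <;> subst hx <;>
      simp [List.count_cons] <;> omega

lemma ocL_mem (w : List α) : ∀ x ∈ ocL w, x = 0 ∨ x = 1 := by
  intro x hx
  unfold ocL at hx
  rw [List.mem_map] at hx
  obtain ⟨i, -, hi⟩ := hx
  by_cases h : ClosedWord (w.take (i+1)) <;> simp [h] at hi <;> omega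

lemma ocL_length (w : List α) : (ocL w).length = w.length := by simp [ocL]

theorem stmt6 {α : Type*} (w : List α) (hw : w ≠ []) (h : ClosedWord w) :
    minPer w = 1 + (ocL w).count 0 ∧
      CompleteReturnTo w (w.take ((ocL w).count 1 - 1)) := by
  obtain ⟨v, hb, hni, hlen⟩ := frontier_ex hw h
  have hlt : lrp w < w.length := lrp_lt hw
  have hc1 : (ocL w).count 1 = lrp w + 1 := count_one_ocL w hw
  have hsum := count_zero_one (ocL w) (ocL_mem w)
  rw [ocL_length] at hsum
  have hvle : v.length ≤ w.length := hb.1.length_le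
  have hvtake : w.take (lrp w) = v := by
    rw [← hlen]; exact (List.prefix_iff_eq_take.mp hb.1).symm
  constructor
  · unfold minPer
    rw [if_neg hw]
    have hmem : (w.length - v.length) ∈ {p | ∃ v, IsBorder v w ∧ p = w.length - v.length} :=
      ⟨v, hb, rfl⟩
    have hle := Nat.sInf_le hmem
    obtain ⟨v', hb', he⟩ := Nat.sInf_mem ⟨_, hmem⟩
    have hv' := border_le_lrp hb'
    omega
  · have hm1 : (ocL w).count 1 - 1 = lrp w := by omega
    rw [hm1, hvtake]
    refine ⟨hb.1, hb.2.1, hb.2.2, ?_⟩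
    rintro i ⟨hile, hpre⟩
    by_contra hcon
    push_neg at hcon
    obtain ⟨h0, hend⟩ := hcon
    exact hni (internal_of_occ (by omega) (by omega) hpre)
end

section
/- For an infinite word w over a finite alphabet, the following are equivalent: (1) the oc-sequence of w is recurrent; (2) w = x^ω for some letter x; (3) the oc-sequence of w is the constant sequence 1^ω. -/
open scoped Classical

variable {α : Type*}

section Basics
variable {w : ℕ → α}

@[simp] lemma length_prefW (w : ℕ → α) (n : ℕ) : (prefW w n).length = n := by
  simp [prefW]

lemma getElem_prefW (w : ℕ → α) {n t : ℕ} (ht : t < n) :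
    (prefW w n)[t]'(by simpa using ht) = w t := by
  simp [prefW]

lemma prefW_take (w : ℕ → α) {m n : ℕ} (h : m ≤ n) : (prefW w n).take m = prefW w m := by
  simp [prefW, ← List.map_take, List.take_range, Nat.min_eq_left h]

lemma prefW_prefix {m n : ℕ} (h : m ≤ n) : prefW w m <+: prefW w n := by
  rw [← prefW_take w h]; exact List.take_prefix _ _

lemma prefix_eq_prefW {v : List α} {n : ℕ} (h : v <+: prefW w n) : v = prefW w v.length := by
  have hl : v.length ≤ n := by simpa using h.length_le
  conv_lhs => rw [List.prefix_iff_eq_take.mp h, prefW_take w hl]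

lemma border_length_lt_s7 {v : List α} {n : ℕ} (h : IsBorder v (prefW w n)) : v.length < n := by
  have hl : v.length ≤ n := by simpa using h.1.length_le
  rcases lt_or_eq_of_le hl with h' | h'
  · exact h'
  · exfalso
    apply h.2.2
    have := prefix_eq_prefW h.1
    rw [this, h']
  -- v = prefW w n

lemma border_index {v : List α} {n : ℕ} (h : IsBorder v (prefW w n)) {t : ℕ}
    (ht : t < v.length) : w (n - v.length + t) = w t := by
  obtain ⟨a, ha⟩ := h.2.1
  have hlen : a.length = n - v.length := by
    have := congrArg List.length ha
    simp at this; omega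
  have h1 : (a ++ v)[a.length + t]'(by simp; omega) = v[t] := by
    rw [List.getElem_append_right (by omega)]
    congr 1; omega
  have hvlt : v.length ≤ n := le_of_lt (border_length_lt_s7 h)
  have h2 : (a ++ v)[a.length + t]'(by simp; omega) = w (a.length + t) := by
    rw [List.getElem_of_eq ha]
    exact getElem_prefW w (by have := congrArg List.length ha; simp at this; omega)
  have h3 : v[t] = w t := by
    rw [List.getElem_of_eq (prefix_eq_prefW h.1)]
    exact getElem_prefW w (by omega)
  rw [← hlen, ← h2, h1, h3]

end Basics

section Core
variable {α : Type*} {w : ℕ → α}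

lemma empty_border_internal {n : ℕ} (hn : 2 ≤ n) : InternalOcc ([] : List α) (prefW w n) := by
  refine ⟨(prefW w n).take 1, (prefW w n).drop 1, ?_, ?_, ?_⟩
  · intro h
    have := congrArg List.length h
    simp at this; omega
  · intro h
    have := congrArg List.length h
    simp at this; omega
  · simp only [List.append_nil]
    exact (List.take_append_drop 1 _).symm

/-- L1: a border with no internal occurrence dominates all borders of all prefixes,
strictly for proper prefixes. -/
lemma clean_border_ge {n : ℕ} {u : List α} (hub : IsBorder u (prefW w n))
    (hcl : ¬ InternalOcc u (prefW w n)) {t : ℕ} (ht : t ≤ n) {z : List α}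
    (hz : IsBorder z (prefW w t)) :
    z.length ≤ u.length ∧ (t < n → z.length < u.length) := by
  have hzt : z.length < t := border_length_lt_s7 hz
  -- key: if u.length ≤ z.length and (z.length > u.length or t < n) then internal occurrence
  have key : u.length < z.length ∨ (u.length = z.length ∧ t < n) → False := by
    intro hcase
    have hzlen : u.length ≤ z.length := by rcases hcase with h | h <;> omega
    obtain ⟨a, ha⟩ := hz.2.1
    -- u <+: z
    have huz : u <+: z := by
      rw [prefix_eq_prefW hub.1, prefix_eq_prefW hz.1]
      exact prefW_prefix hzlen
    obtain ⟨b, hb⟩ := huz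
    obtain ⟨c, hc⟩ := prefW_prefix (w := w) ht
    have ha' : a.length + z.length = t := by
      have := congrArg List.length ha; simpa using this
    have hb' : u.length + b.length = z.length := by
      have := congrArg List.length hb; simpa using this
    have hc' : t + c.length = n := by
      have := congrArg List.length hc; simpa using this
    apply hcl
    refine ⟨a, b ++ c, ?_, ?_, ?_⟩
    · intro h
      have : a.length = 0 := by rw [h]; rfl
      omega
    · intro h
      have := congrArg List.length h
      simp only [List.length_append, List.length_nil] at this
      rcases hcase with h | h <;> omega
    · rw [← hc, ← ha, ← hb]; simp
  constructor
  · by_contra h; exact key (Or.inl (by omega))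
  · intro htn
    by_contra h
    rcases lt_or_eq_of_le (by omega : u.length ≤ z.length) with h' | h'
    · exact key (Or.inl h')
    · exact key (Or.inr ⟨h', htn⟩)

/-- L2: a border longer than every border of every proper prefix has no internal occurrence. -/
lemma clean_of_record {n : ℕ} {z : List α} (hz : IsBorder z (prefW w n))
    (hbig : ∀ t < n, ∀ z' : List α, IsBorder z' (prefW w t) → z'.length < z.length) :
    ¬ InternalOcc z (prefW w n) := by
  rintro ⟨p, s, hp, hs, hP⟩
  have hlen := congrArg List.length hP
  simp at hlen
  have hp1 : 1 ≤ p.length := List.length_pos_iff.mpr hp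
  have hs1 : 1 ≤ s.length := List.length_pos_iff.mpr hs
  set t := p.length + z.length with htdef
  have htn : t < n := by omega
  have hzb : IsBorder z (prefW w t) := by
    refine ⟨?_, ?_, ?_⟩
    · rw [prefix_eq_prefW hz.1]; exact prefW_prefix (by omega)
    · refine ⟨p, ?_⟩
      have : prefW w t = (prefW w n).take t := (prefW_take w (le_of_lt htn)).symm
      rw [this, hP]
      have h1 : t = (p ++ z).length := by simp [htdef]
      rw [h1]
      exact List.take_left.symm
    · intro h
      have := congrArg List.length h
      simp at this; omega
  exact absurd (hbig t htn z hzb) (by omega)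

end Core

section Bst
variable {α : Type*} {w : ℕ → α}

def BstP (w : ℕ → α) (n k : ℕ) : Prop :=
  ∃ t ≤ n, ∃ v : List α, IsBorder v (prefW w t) ∧ v.length = k

noncomputable def Bst (w : ℕ → α) (n : ℕ) : ℕ := Nat.findGreatest (BstP w n) n

lemma le_Bst {t n : ℕ} (ht : t ≤ n) {v : List α} (hv : IsBorder v (prefW w t)) :
    v.length ≤ Bst w n :=
  Nat.le_findGreatest (by have := border_length_lt_s7 hv; omega) ⟨t, ht, v, hv, rfl⟩

lemma Bst_spec (n : ℕ) :
    Bst w n = 0 ∨ ∃ t ≤ n, ∃ v : List α, IsBorder v (prefW w t) ∧ v.length = Bst w n := by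
  rcases Nat.eq_zero_or_pos (Bst w n) with h | h
  · exact Or.inl h
  · right
    have : ¬ (Nat.findGreatest (BstP w n) n = 0) := by
      have h' := h.ne'
      simpa [Bst] using h'
    rw [Nat.findGreatest_eq_zero_iff] at this
    push_neg at this
    obtain ⟨k, hk1, hkn, hPk⟩ := this
    exact Nat.findGreatest_spec hkn hPk

lemma Bst_mono {m n : ℕ} (h : m ≤ n) : Bst w m ≤ Bst w n := by
  rcases Bst_spec (w := w) m with h0 | ⟨t, ht, v, hv, hl⟩
  · omega
  · rw [← hl]; exact le_Bst (le_trans ht h) hv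

lemma Bst_lt {n : ℕ} : Bst w n ≤ n - 1 := by
  rcases Bst_spec (w := w) n with h0 | ⟨t, ht, v, hv, hl⟩
  · omega
  · have := border_length_lt_s7 hv; omega

lemma closed_nonempty {n : ℕ} (hc : ClosedWord (prefW w (n+1))) :
    ∃ u : List α, IsBorder u (prefW w (n+1)) ∧ ¬ InternalOcc u (prefW w (n+1)) := by
  rcases hc with h | h
  · exfalso; have := congrArg List.length h; simp at this
  · exact h

/-- At a closed step (n ≥ 1), Bst increments and the clean border is `prefW w (Bst w n + 1)`. -/
lemma Bst_closed {n : ℕ} (hn : 1 ≤ n) (hc : ClosedWord (prefW w (n+1))) :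
    IsBorder (prefW w (Bst w n + 1)) (prefW w (n+1)) ∧ Bst w (n+1) = Bst w n + 1 := by
  obtain ⟨u, hub, hcl⟩ := closed_nonempty hc
  have hune : u ≠ [] := by
    intro h
    rw [h] at hcl
    exact hcl (empty_border_internal (by omega))
  have hu1 : 1 ≤ u.length := List.length_pos_iff.mpr hune
  have hulen : u.length < n + 1 := border_length_lt_s7 hub
  -- Bst w n < u.length
  have hlow : Bst w n < u.length := by
    rcases Bst_spec (w := w) n with h0 | ⟨t, ht, v, hv, hl⟩
    · omega
    · have := (clean_border_ge hub hcl (by omega : t ≤ n + 1) hv).2 (by omega)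
      omega
  -- u.dropLast-like bound: prefW w (u.length - 1) is a border of prefW w n
  have hup : u.length ≤ Bst w n + 1 := by
    have hdb : IsBorder (prefW w (u.length - 1)) (prefW w n) := by
      refine ⟨prefW_prefix (by omega), ?_, ?_⟩
      · obtain ⟨a, ha⟩ := hub.2.1
        have halen : a.length = n + 1 - u.length := by
          have := congrArg List.length ha; simp at this; omega
        refine ⟨a, ?_⟩
        have h1 : (a ++ u).take n = prefW w n := by rw [ha]; exact prefW_take w (by omega)
        rw [List.take_append] at h1
        rw [List.take_of_length_le (by omega)] at h1
        have h2 : u.take (n - a.length) = prefW w (u.length - 1) := by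
          have h3 : n - a.length = u.length - 1 := by omega
          conv_lhs => rw [prefix_eq_prefW hub.1]
          rw [h3, prefW_take w (by omega)]
        rw [h2] at h1
        exact h1
      · intro h
        have := congrArg List.length h
        simp at this; omega
    have := le_Bst (le_refl n) hdb
    simp at this; omega
  have huv : u = prefW w (Bst w n + 1) := by
    have : u.length = Bst w n + 1 := by omega
    rw [prefix_eq_prefW hub.1, this]
  constructor
  · rw [← huv]; exact hub
  · apply le_antisymm
    · rcases Bst_spec (w := w) (n+1) with h0 | ⟨t, ht, v, hv, hl⟩
      · omega
      · have := (clean_border_ge hub hcl ht hv).1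
        omega
    · have := le_Bst (le_refl (n+1)) hub
      omega

/-- At an open step (n ≥ 1), Bst stalls. -/
lemma Bst_open {n : ℕ} (hn : 1 ≤ n) (ho : ¬ ClosedWord (prefW w (n+1))) :
    Bst w (n+1) = Bst w n := by
  apply le_antisymm
  · rcases Bst_spec (w := w) (n+1) with h0 | ⟨t, ht, v, hv, hl⟩
    · omega
    · rcases lt_or_eq_of_le ht with ht' | ht'
      · rw [← hl]; exact le_Bst (by omega) hv
      · subst ht'
        by_contra hgt
        apply ho
        right
        refine ⟨v, hv, clean_of_record hv ?_⟩
        intro t' ht' z' hz'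
        have := le_Bst (w := w) (by omega : t' ≤ n) hz'
        omega
  · exact Bst_mono (by omega)

/-- If w is j-periodic, Bst w n ≥ n - j for n > j. -/
lemma Bst_periodic {j : ℕ} (hj : 1 ≤ j) (hper : ∀ s, w (s + j) = w s) {n : ℕ} (hn : j < n) :
    n - j ≤ Bst w n := by
  have hb : IsBorder (prefW w (n - j)) (prefW w n) := by
    refine ⟨prefW_prefix (by omega), ?_, ?_⟩
    · refine ⟨(prefW w n).take j, ?_⟩
      have hdrop : (prefW w n).drop j = prefW w (n - j) := by
        apply List.ext_getElem
        · simp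
        · intro t h1 h2
          have e1 : ((prefW w n).drop j)[t]'h1 = (prefW w n)[j + t]'(by simp at h1 ⊢; omega) :=
            List.getElem_drop
          rw [e1, getElem_prefW w (by simp at h1; omega), getElem_prefW w (by simp at h2; omega)]
          rw [show j + t = t + j by omega]
          exact hper t
      rw [← hdrop]
      exact List.take_append_drop j _
    · intro h
      have := congrArg List.length h
      simp at this; omega
  have := le_Bst (le_refl n) hb
  simp at this; omega

end Bst

section Easy
variable {α : Type*} {w : ℕ → α}

lemma ocI_eq_one_iff {n : ℕ} : ocI w n = 1 ↔ ClosedWord (prefW w (n+1)) := by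
  unfold ocI
  split <;> simp_all

lemma ocI_eq_zero_iff {n : ℕ} : ocI w n = 0 ↔ ¬ ClosedWord (prefW w (n+1)) := by
  unfold ocI
  split <;> simp_all

lemma ocI_cases (n : ℕ) : ocI w n = 1 ∨ ocI w n = 0 := by
  unfold ocI; split <;> simp

lemma ocI_zero : ocI w 0 = 1 := by
  rw [ocI_eq_one_iff]
  right
  refine ⟨[], ⟨List.nil_prefix, List.nil_suffix, ?_⟩, ?_⟩
  · intro h; have := congrArg List.length h; simp at this
  · rintro ⟨p, s, hp, hs, hP⟩
    have := congrArg List.length hP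
    have hp1 : 1 ≤ p.length := List.length_pos_iff.mpr hp
    have hs1 : 1 ≤ s.length := List.length_pos_iff.mpr hs
    simp at this; omega

/-- constant word ⇒ oc ≡ 1 -/
lemma ocI_one_of_const {x : α} (hx : ∀ n, w n = x) (n : ℕ) : ocI w n = 1 := by
  rw [ocI_eq_one_iff]
  right
  refine ⟨prefW w n, ⟨prefW_prefix (by omega), ⟨[x], ?_⟩, ?_⟩, ?_⟩
  · apply List.ext_getElem
    · simp
    · intro t h1 h2
      have hr : (prefW w (n+1))[t]'h2 = x := by
        rw [getElem_prefW w (by simpa using h2)]; exact hx t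
      rw [hr]
      rcases Nat.eq_zero_or_pos t with h | h
      · subst h
        rw [List.getElem_append_left (by simp)]
        simp
      · have e1 : ([x] ++ prefW w n)[t]'h1 = (prefW w n)[t-1]'(by simp at h1 ⊢; omega) := by
          rw [List.getElem_append_right (by simp; omega)]
          simp
        rw [e1, getElem_prefW w (by simp at h1; omega)]
        exact hx (t-1)
  · intro h; have := congrArg List.length h; simp at this
  · rintro ⟨p, s, hp, hs, hP⟩
    have := congrArg List.length hP
    have hp1 : 1 ≤ p.length := List.length_pos_iff.mpr hp
    have hs1 : 1 ≤ s.length := List.length_pos_iff.mpr hs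
    simp at this; omega

/-- oc ≡ 1 ⇒ constant -/
lemma const_of_ocI_one (h : ∀ n, ocI w n = 1) : ∀ n, w n = w 0 := by
  intro n
  induction n using Nat.strong_induction_on with
  | _ n ih =>
    rcases Nat.eq_zero_or_pos n with h0 | h0
    · subst h0; rfl
    obtain ⟨k, rfl⟩ : ∃ k, n = k + 1 := ⟨n - 1, by omega⟩
    have hc : ClosedWord (prefW w (k+2)) := ocI_eq_one_iff.mp (h (k+1))
    obtain ⟨u, hub, hcl⟩ := closed_nonempty hc
    have hune : u ≠ [] := by
      intro he; rw [he] at hcl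
      exact hcl (empty_border_internal (by omega))
    have hu1 : 1 ≤ u.length := List.length_pos_iff.mpr hune
    have hulen : u.length < k + 2 := border_length_lt_s7 hub
    have hidx := border_index hub (t := u.length - 1) (by omega)
    have e1 : k + 2 - u.length + (u.length - 1) = k + 1 := by omega
    rw [e1] at hidx
    rw [hidx]
    exact ih (u.length - 1) (by omega)

/-- oc ≡ 1 ⇒ recurrent -/
lemma recurrent_of_ocI_one (h : ∀ n, ocI w n = 1) : RecurrentWord (ocI w) := by
  rintro u ⟨i, hi⟩ N
  refine ⟨N, le_refl N, ?_⟩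
  unfold InfixAt at hi ⊢
  rw [hi]
  simp only [List.length_map, List.length_range]
  apply List.map_congr_left
  intro a _
  rw [h, h]

end Easy

section Count
variable {α : Type*} {w : ℕ → α}

/-- number of zeros of oc among positions 1..n-1 -/
noncomputable def zc (w : ℕ → α) : ℕ → ℕ := fun n =>
  Nat.rec 0 (fun m acc => acc + (if 1 ≤ m ∧ ocI w m = 0 then 1 else 0)) n

lemma zc_zero : zc w 0 = 0 := rfl

lemma zc_succ (n : ℕ) : zc w (n+1) = zc w n + (if 1 ≤ n ∧ ocI w n = 0 then 1 else 0) := rfl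

lemma zc_mono {m n : ℕ} (h : m ≤ n) : zc w m ≤ zc w n := by
  induction n with
  | zero => simp_all
  | succ n ih =>
    rcases Nat.eq_or_lt_of_le h with h' | h'
    · subst h'; omega
    · have := ih (by omega)
      rw [zc_succ]; split <;> omega

lemma count_bound : ∀ n, 1 ≤ n → Bst w n + zc w n + 1 ≤ n := by
  intro n
  induction n with
  | zero => omega
  | succ n ih =>
    intro _
    rcases Nat.eq_zero_or_pos n with h0 | h0
    · subst h0
      have h1 : Bst w (0+1) ≤ 0 := Bst_lt (w := w)
      rw [zc_succ, zc_zero]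
      have : ¬ (1 ≤ 0 ∧ ocI w 0 = 0) := by simp
      rw [if_neg this]; omega
    have hIH := ih h0
    rcases ocI_cases (w := w) n with hc | hc
    · have := (Bst_closed h0 (ocI_eq_one_iff.mp hc)).2
      have hz : zc w (n+1) = zc w n := by
        rw [zc_succ]
        have : ¬ (1 ≤ n ∧ ocI w n = 0) := by
          rintro ⟨-, h2⟩; rw [hc] at h2; exact one_ne_zero h2
        rw [if_neg this]
        omega
      omega
    · have := Bst_open h0 (ocI_eq_zero_iff.mp hc)
      have hz : zc w (n+1) ≤ zc w n + 1 := by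
        rw [zc_succ]; split <;> omega
      omega

end Count

section Hard
variable {α : Type*} {w : ℕ → α}

lemma map_range_eq {β : Type*} {f g : ℕ → β} {L : ℕ}
    (h : (List.range L).map f = (List.range L).map g) {t : ℕ} (ht : t < L) : f t = g t := by
  have h1 : ((List.range L).map f)[t]'(by simpa using ht)
      = ((List.range L).map g)[t]'(by simpa using ht) := List.getElem_of_eq h _
  simpa using h1

lemma infixAt_base (s : ℕ → ℕ) (r L : ℕ) :
    InfixAt s ((List.range L).map fun t => s (r+t)) r := by
  unfold InfixAt
  simp only [List.length_map, List.length_range]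

lemma infix_shift {s : ℕ → ℕ} {r L i : ℕ}
    (hInf : InfixAt s ((List.range L).map fun t => s (r+t)) i) :
    ∀ t, t < L → s (i+t) = s (r+t) := by
  unfold InfixAt at hInf
  simp only [List.length_map, List.length_range] at hInf
  intro t ht
  exact (map_range_eq hInf ht).symm

lemma ocI_one_of_recurrent (h : RecurrentWord (ocI w)) : ∀ n, ocI w n = 1 := by
  by_contra hcon
  push_neg at hcon
  obtain ⟨p, hp⟩ := hcon
  have hp0 : ocI w p = 0 := by rcases ocI_cases (w := w) p with h1 | h1 <;> tauto
  -- values recur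
  have hval : ∀ b N, ∃ i, N ≤ i ∧ ocI w i = ocI w b := by
    intro b N
    obtain ⟨i, hi, hInf⟩ := h _ ⟨b, infixAt_base (ocI w) b 1⟩ N
    refine ⟨i, hi, ?_⟩
    have := infix_shift hInf 0 (by omega)
    simpa using this
  have ones : ∀ N, ∃ i, N ≤ i ∧ ocI w i = 1 := by
    intro N; obtain ⟨i, hi, he⟩ := hval 0 N
    exact ⟨i, hi, by rw [he, ocI_zero]⟩
  have zeros : ∀ N, ∃ i, N ≤ i ∧ ocI w i = 0 := by
    intro N; obtain ⟨i, hi, he⟩ := hval p N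
    exact ⟨i, hi, by rw [he, hp0]⟩
  -- q = first 1 after p
  have hset : ∃ k, ocI w (p+1+k) = 1 := by
    obtain ⟨i, hi, h1⟩ := ones (p+1)
    exact ⟨i - (p+1), by rw [show p+1+(i-(p+1)) = i by omega]; exact h1⟩
  set k0 := Nat.find hset with hk0
  set q := p + 1 + k0 with hqdef
  have hq1 : ocI w q = 1 := Nat.find_spec hset
  have hqmin : ∀ k, k < k0 → ocI w (p+1+k) = 0 := by
    intro k hk
    have := Nat.find_min hset hk
    rcases ocI_cases (w := w) (p+1+k) with h1 | h1 <;> tauto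
  -- r = last 1 before q
  set r := Nat.findGreatest (fun t => ocI w t = 1) (q-1) with hrdef
  have hr1 : ocI w r = 1 := by
    have := Nat.findGreatest_spec (P := fun t => ocI w t = 1) (m := 0) (n := q-1)
      (by omega) ocI_zero
    rw [hrdef]; exact this
  have hrle : r ≤ q - 1 := Nat.findGreatest_le _
  have hrgap : ∀ t, r < t → t ≤ q - 1 → ocI w t = 0 := by
    intro t h1 h2
    have := Nat.findGreatest_is_greatest (by rw [← hrdef]; omega) h2
    rcases ocI_cases (w := w) t with h3 | h3 <;> tauto
  have hrp : r < p := by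
    rcases lt_trichotomy r p with h1 | h1 | h1
    · exact h1
    · exfalso; rw [h1, hp0] at hr1; omega
    · exfalso
      have hrq : r < q := by omega
      have := hqmin (r - (p+1)) (by omega)
      rw [show p+1+(r-(p+1)) = r by omega, hr1] at this
      omega
  set j := q - 1 - r with hjdef
  have hj : 1 ≤ j := by omega
  have hq_eq : q = r + j + 1 := by omega
  have hzero_between : ∀ t, t < j → ocI w (r+1+t) = 0 := fun t ht =>
    hrgap (r+1+t) (by omega) (by omega)
  -- Bst unbounded
  have hBst : ∀ K : ℕ, ∃ N, K ≤ Bst w N := by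
    intro K
    induction K with
    | zero => exact ⟨0, Nat.zero_le _⟩
    | succ K ih =>
      obtain ⟨N, hN⟩ := ih
      obtain ⟨i, hi, h1⟩ := ones (max N 1)
      have hi1 : 1 ≤ i := le_trans (le_max_right N 1) hi
      have hiN : N ≤ i := le_trans (le_max_left N 1) hi
      have hcl := (Bst_closed hi1 (ocI_eq_one_iff.mp h1)).2
      have hm := Bst_mono (w := w) hiN
      exact ⟨i + 1, by omega⟩
  -- periodicity
  have hper : ∀ s, w (s + j) = w s := by
    intro s
    obtain ⟨N, hN⟩ := hBst (s + j + 1)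
    obtain ⟨i, hi, hInf⟩ := h _ ⟨r, infixAt_base (ocI w) r (j+2)⟩ (max N 1)
    have hptw := infix_shift hInf
    have hi1 : 1 ≤ i := le_trans (le_max_right N 1) hi
    have hiN : N ≤ i := le_trans (le_max_left N 1) hi
    have h1i : ocI w i = 1 := by
      have := hptw 0 (by omega); simpa [hr1] using this
    have hclosed1 := Bst_closed hi1 (ocI_eq_one_iff.mp h1i)
    set L := Bst w i + 1 with hLdef
    have hL : Bst w (i+1) = L := hclosed1.2
    have hu : IsBorder (prefW w L) (prefW w (i+1)) := hclosed1.1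
    -- stall through the zeros
    have hstall : ∀ t, t ≤ j → Bst w (i+1+t) = L := by
      intro t
      induction t with
      | zero => intro _; simpa using hL
      | succ t iht =>
        intro ht
        have h0t : ocI w (i+1+t) = 0 := by
          have he := hptw (t+1) (by omega)
          rw [show i+(t+1) = i+1+t by omega, show r+(t+1) = r+1+t by omega] at he
          rw [he]
          exact hzero_between t (by omega)
        have := Bst_open (n := i+1+t) (by omega) (ocI_eq_zero_iff.mp h0t)
        rw [show i+1+(t+1) = (i+1+t)+1 by omega, this]
        exact iht (by omega)
    have h1q : ocI w (i+j+1) = 1 := by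
      have he := hptw (j+1) (by omega)
      rw [show i+(j+1) = i+j+1 by omega, show r+(j+1) = q by omega] at he
      rw [he]; exact hq1
    have hclosed2 := Bst_closed (n := i+j+1) (by omega) (ocI_eq_one_iff.mp h1q)
    have hBval : Bst w (i+j+1) = L := by
      have := hstall j (le_refl j)
      rw [show i+1+j = i+j+1 by omega] at this
      exact this
    have hu' : IsBorder (prefW w (L+1)) (prefW w (i+j+2)) := by
      have := hclosed2.1
      rw [hBval] at this
      rw [show i+j+1+1 = i+j+2 by omega] at this
      exact this
    have hLle : L ≤ i := by
      have h1 : Bst w i ≤ i - 1 := Bst_lt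
      omega
    have hKL : s + j + 1 ≤ L := by
      have := Bst_mono (w := w) hiN
      omega
    have e1 := border_index hu (t := s + j) (by simp; omega)
    have e2 := border_index hu' (t := s) (by simp; omega)
    simp only [length_prefW] at e1 e2
    rw [show i+1 - L + (s+j) = i+j+2 - (L+1) + s by omega] at e1
    rw [e2] at e1
    exact e1.symm
  -- zc unbounded
  have hzc : ∀ K : ℕ, ∃ n, 1 ≤ n ∧ K ≤ zc w n := by
    intro K
    induction K with
    | zero => exact ⟨1, le_refl 1, Nat.zero_le _⟩
    | succ K ih =>
      obtain ⟨n, hn1, hKn⟩ := ih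
      obtain ⟨i, hi, h0⟩ := zeros (max n 1)
      have hi1 : 1 ≤ i := le_trans (le_max_right n 1) hi
      have hin : n ≤ i := le_trans (le_max_left n 1) hi
      refine ⟨i + 1, by omega, ?_⟩
      rw [zc_succ, if_pos ⟨hi1, h0⟩]
      have := zc_mono (w := w) hin
      omega
  obtain ⟨n0, hn01, hn0⟩ := hzc j
  set n := max n0 (j+1) with hndef
  have h1 := count_bound (w := w) n (by omega)
  have h2 := Bst_periodic hj hper (n := n) (by omega)
  have h3 : j ≤ zc w n := le_trans hn0 (zc_mono (le_max_left _ _))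
  omega

end Hard

theorem stmt7 {α : Type*} [Fintype α] (w : ℕ → α) :
    (RecurrentWord (ocI w) ↔ ∃ x : α, ∀ n, w n = x) ∧
    (RecurrentWord (ocI w) ↔ ∀ n, ocI w n = 1) := by
  have h31 : (∀ n, ocI w n = 1) → RecurrentWord (ocI w) := recurrent_of_ocI_one
  have h13 : RecurrentWord (ocI w) → ∀ n, ocI w n = 1 := ocI_one_of_recurrent
  constructor
  · constructor
    · intro h
      exact ⟨w 0, const_of_ocI_one (h13 h)⟩
    · rintro ⟨x, hx⟩
      exact h31 (ocI_one_of_const hx)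
  · exact ⟨h13, h31⟩
end

section
/- Let w be a finite or infinite word and s, t positive integers. If 1^t 0^s 1 is a factor of oc(w), then t ≤ s. In other words, in the oc-sequence of any word, every maximal run of 0s is at least as long as the immediately preceding run of 1s. -/
open scoped Classical

variable {α : Type*}

namespace OCProof

variable {α : Type*}

def seg (W : ℕ → α) (a b : ℕ) : List α := (List.range b).map fun k => W (a + k)

def OccA (W : ℕ → α) (l j : ℕ) : Prop := ∀ k, k < l → W (j + k) = W k

lemma seg_length (W : ℕ → α) (a b : ℕ) : (seg W a b).length = b := by simp [seg]

lemma seg_getElem (W : ℕ → α) {a b k : ℕ} (h : k < b) :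
    (seg W a b)[k]'(by simpa [seg_length] using h) = W (a + k) := by
  simp [seg]

lemma seg_add (W : ℕ → α) (a b c : ℕ) :
    seg W a (b + c) = seg W a b ++ seg W (a + b) c := by
  simp only [seg, List.range_add, List.map_append, List.map_map]
  congr 1
  apply List.map_congr_left
  intro k _
  simp [Function.comp, Nat.add_assoc]

lemma prefW_eq_seg (W : ℕ → α) (n : ℕ) : prefW W n = seg W 0 n := by
  simp [prefW, seg]

lemma prefW_length (W : ℕ → α) (n : ℕ) : (prefW W n).length = n := by simp [prefW]

lemma occ_iff_seg (W : ℕ → α) (l j : ℕ) : OccA W l j ↔ seg W j l = seg W 0 l := by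
  constructor
  · intro h
    apply List.ext_getElem (by simp [seg_length])
    intro k hk _
    rw [seg_getElem W (by simpa [seg_length] using hk),
        seg_getElem W (by simpa [seg_length] using hk)]
    simpa using h k (by simpa [seg_length] using hk)
  · intro h k hk
    have h1 := seg_getElem W (a := j) hk
    have h2 := seg_getElem W (a := 0) hk
    have h3 : (seg W j l)[k]'(by simpa [seg_length] using hk)
        = (seg W 0 l)[k]'(by simpa [seg_length] using hk) :=
      List.getElem_of_eq h _
    rw [h1] at h3
    rw [h2] at h3
    simpa using h3

lemma occ_mono (W : ℕ → α) {l l' j : ℕ} (h : l' ≤ l) (ho : OccA W l j) : OccA W l' j :=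
  fun k hk => ho k (lt_of_lt_of_le hk h)

lemma seg_take (W : ℕ → α) {a b c : ℕ} (h : c ≤ b) : (seg W a b).take c = seg W a c := by
  obtain ⟨d, rfl⟩ := Nat.le.dest h
  rw [seg_add, List.take_append_of_le_length (by simp [seg_length]), List.take_of_length_le (by simp [seg_length])]

lemma seg_drop (W : ℕ → α) {a b c : ℕ} (h : c ≤ b) : (seg W a b).drop c = seg W (a + c) (b - c) := by
  obtain ⟨d, rfl⟩ := Nat.le.dest h
  rw [seg_add, List.drop_append_of_le_length (by simp [seg_length])]
  simp [seg_length]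

lemma prefW_take (W : ℕ → α) {b m : ℕ} (h : b ≤ m) :
    (prefW W m).take b = prefW W b := by
  rw [prefW_eq_seg, prefW_eq_seg, seg_take W h]

lemma seg_zero_append (W : ℕ → α) (b c : ℕ) :
    seg W 0 b ++ seg W b c = seg W 0 (b + c) := by
  rw [seg_add, Nat.zero_add]

lemma internal_iff (W : ℕ → α) (l m : ℕ) :
    InternalOcc (prefW W l) (prefW W m) ↔ ∃ j, 0 < j ∧ j + l < m ∧ OccA W l j := by
  constructor
  · rintro ⟨p, s, hp, hs, heq⟩
    have hlen : p.length + l + s.length = m := by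
      have := congrArg List.length heq
      simp [prefW_length] at this
      omega
    have hs0 : 0 < s.length := List.length_pos_iff.mpr hs
    have hp0 : 0 < p.length := List.length_pos_iff.mpr hp
    refine ⟨p.length, hp0, by omega, ?_⟩
    have h1 : (prefW W m).drop p.length = prefW W l ++ s := by
      rw [heq, List.append_assoc, List.drop_left]
    have h2 : ((prefW W m).drop p.length).take l = prefW W l := by
      rw [h1, List.take_append_of_le_length (by simp [prefW_length]),
        List.take_of_length_le (by simp [prefW_length])]
    rw [prefW_eq_seg, seg_drop W (by omega), seg_take W (by omega)] at h2
    rw [occ_iff_seg, ← prefW_eq_seg]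
    calc seg W p.length l = seg W (0 + p.length) l := by rw [Nat.zero_add]
      _ = prefW W l := h2
  · rintro ⟨j, hj, hjm, hocc⟩
    refine ⟨seg W 0 j, seg W (j + l) (m - j - l), ?_, ?_, ?_⟩
    · simp only [← List.length_pos_iff, seg_length]; omega
    · simp only [← List.length_pos_iff, seg_length]; omega
    · have h1 : prefW W l = seg W j l := by
        rw [prefW_eq_seg, ← (occ_iff_seg W l j).mp hocc]
      rw [h1, prefW_eq_seg, seg_zero_append, seg_zero_append]
      have : j + l + (m - j - l) = m := by omega
      rw [this]

lemma border_mk (W : ℕ → α) {l m : ℕ} (hl : l < m) (hocc : OccA W l (m - l)) :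
    IsBorder (prefW W l) (prefW W m) := by
  refine ⟨?_, ?_, ?_⟩
  · rw [List.prefix_iff_eq_take, prefW_length, prefW_take W hl.le]
  · refine ⟨seg W 0 (m - l), ?_⟩
    have h1 : prefW W l = seg W (m - l) l := by
      rw [prefW_eq_seg, ← (occ_iff_seg W l (m - l)).mp hocc]
    rw [h1, seg_zero_append, prefW_eq_seg]
    have : m - l + l = m := by omega
    rw [this]
  · intro h
    have := congrArg List.length h
    simp [prefW_length] at this
    omega

lemma closed_intro (W : ℕ → α) {m b : ℕ} (hb : b < m) (hocc : OccA W b (m - b))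
    (huni : ∀ j, 0 < j → j + b < m → ¬ OccA W b j) : ClosedWord (prefW W m) := by
  right
  refine ⟨prefW W b, border_mk W hb hocc, ?_⟩
  rw [internal_iff]
  rintro ⟨j, hj, hjm, ho⟩
  exact huni j hj hjm ho

lemma closed_elim (W : ℕ → α) {m : ℕ} (hm : 1 ≤ m) (h : ClosedWord (prefW W m)) :
    ∃ b, b < m ∧ (2 ≤ m → 1 ≤ b) ∧ OccA W b (m - b) ∧
      ∀ j, 0 < j → j + b ≤ m → OccA W b j → j = m - b := by
  rcases h with h | ⟨u, ⟨hpre, hsuf, hne⟩, hint⟩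
  · exfalso
    have := congrArg List.length h
    simp [prefW_length] at this
    omega
  · have hul : u.length ≤ m := by
      have := hpre.length_le
      simpa [prefW_length] using this
    have hu : u = prefW W u.length := by
      have h1 : u = (prefW W m).take u.length := List.prefix_iff_eq_take.mp hpre
      rw [prefW_take W hul] at h1
      exact h1
    have hlt : u.length < m := by
      rcases Nat.lt_or_ge u.length m with h' | h'
      · exact h'
      · exfalso; apply hne; rw [hu]; congr 1; omega
    have hocc : OccA W u.length (m - u.length) := by
      obtain ⟨tl, htl⟩ := hsuf
      have htlen : tl.length = m - u.length := by
        have := congrArg List.length htl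
        simp [prefW_length] at this
        omega
      have hdrop : (prefW W m).drop (m - u.length) = u := by
        rw [← htl, ← htlen, List.drop_left]
      rw [prefW_eq_seg, seg_drop W (by omega)] at hdrop
      rw [occ_iff_seg]
      calc seg W (m - u.length) u.length
          = seg W (0 + (m - u.length)) (m - (m - u.length)) := by
            congr 1 <;> omega
        _ = u := hdrop
        _ = seg W 0 u.length := by
            conv_lhs => rw [hu, prefW_eq_seg]
    refine ⟨u.length, hlt, ?_, hocc, ?_⟩
    · intro h2
      by_contra hb
      push_neg at hb
      have hu0 : u = [] := List.length_eq_zero_iff.mp (by omega)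
      apply hint
      rw [hu0]
      have hnil : ([] : List α) = prefW W 0 := by simp [prefW]
      rw [hnil, internal_iff]
      exact ⟨1, one_pos, by omega, fun k hk => absurd hk (by omega)⟩
    · intro j hj hjb hoj
      by_contra hne2
      have hlt2 : j + u.length < m := by
        rcases Nat.lt_or_ge (j + u.length) m with h' | h'
        · exact h'
        · exfalso; exact hne2 (by omega)
      apply hint
      rw [hu, internal_iff]
      exact ⟨j, hj, hlt2, hoj⟩

lemma open_elim (W : ℕ → α) {m l : ℕ} (hl : l < m) (hocc : OccA W l (m - l))
    (h : ¬ ClosedWord (prefW W m)) :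
    ∃ j, 0 < j ∧ j + l < m ∧ OccA W l j := by
  by_contra hc
  push_neg at hc
  exact h (closed_intro W hl hocc fun j hj hjm ho => hc j hj hjm ho)

theorem core (W : ℕ → α) (i t s : ℕ) (hs : 0 < s) (hst : s < t)
    (hC : ∀ m, i + 1 ≤ m → m ≤ i + t → ClosedWord (prefW W m))
    (hO : ∀ m, i + t + 1 ≤ m → m ≤ i + t + s → ¬ ClosedWord (prefW W m))
    (hN : ClosedWord (prefW W (i + t + s + 1))) : False := by
  -- border-length function along the closed run
  have hbm : ∀ m : ℕ, ∃ b, i + 1 ≤ m → m ≤ i + t →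
      (b < m ∧ (2 ≤ m → 1 ≤ b) ∧ OccA W b (m - b) ∧
        ∀ j, 0 < j → j + b ≤ m → OccA W b j → j = m - b) := by
    intro m
    by_cases h1 : i + 1 ≤ m ∧ m ≤ i + t
    · obtain ⟨b, hb⟩ := closed_elim W (by omega) (hC m h1.1 h1.2)
      exact ⟨b, fun _ _ => hb⟩
    · exact ⟨0, fun ha hb => absurd ⟨ha, hb⟩ h1⟩
  choose bf hbf using hbm
  have step : ∀ m, i + 1 ≤ m → m + 1 ≤ i + t → bf (m + 1) = bf m + 1 := by
    intro m h1 h2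
    obtain ⟨hblt, -, hbocc, hbuni⟩ := hbf m h1 (by omega)
    obtain ⟨hblt', -, hbocc', hbuni'⟩ := hbf (m + 1) (by omega) h2
    have hge : bf m + 1 ≤ bf (m + 1) := by
      by_contra hlt2
      push_neg at hlt2
      have hocc2 : OccA W (bf (m + 1)) (m - bf m) := occ_mono W (by omega) hbocc
      have := hbuni' (m - bf m) (by omega) (by omega) hocc2
      omega
    have hle : bf (m + 1) ≤ bf m + 1 := by
      by_contra hgt
      push_neg at hgt
      have hocc3 : OccA W (bf m) (m + 1 - bf (m + 1)) := occ_mono W (by omega) hbocc'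
      have := hbuni (m + 1 - bf (m + 1)) (by omega) (by omega) hocc3
      omega
    omega
  have run : ∀ k, k ≤ t - 1 → bf (i + t - k) + k = bf (i + t) := by
    intro k
    induction k with
    | zero => simp
    | succ k ih =>
      intro hk
      have h1 := step (i + t - (k + 1)) (by omega) (by omega)
      have h2 := ih (by omega)
      rw [show i + t - (k + 1) + 1 = i + t - k from by omega] at h1
      omega
  obtain ⟨hBn, -, OccB, uniB⟩ := hbf (i + t) (by omega) le_rfl
  set B := bf (i + t) with hBdef
  set P := i + t - B with hPdef
  have hBt : t - 1 ≤ B := by have := run (t - 1) le_rfl; omega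
  have hsB : s ≤ B := by omega
  have hP1 : 1 ≤ P := by omega
  -- the letter following the last closed prefix breaks the period
  have hne : W (i + t) ≠ W B := by
    intro heq
    have honeocc : OccA W (B + 1) P := by
      intro k hk
      rcases Nat.lt_or_ge k B with h' | h'
      · exact OccB k h'
      · rw [show k = B from by omega, show P + B = i + t from by omega]
        exact heq
    apply hO (i + t + 1) (by omega) (by omega)
    apply closed_intro W (m := i + t + 1) (b := B + 1) (by omega)
    · rw [show i + t + 1 - (B + 1) = P from by omega]
      exact honeocc
    · intro j hj hjm hoj
      have hoB : OccA W B j := occ_mono W (by omega) hoj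
      have := uniB j hj (by omega) hoB
      omega
  -- data for the re-closing prefix
  obtain ⟨V, hVlt, hV1, hVocc, hVuni⟩ := closed_elim W (by omega) hN
  have hV1' : 1 ≤ V := hV1 (by omega)
  -- push repeated prefixes down through the open run
  have chain : ∀ (l d : ℕ), d ≤ s →
      (∃ j, 0 < j ∧ j + l ≤ i + t + d ∧ OccA W l j) →
      ∃ j, 0 < j ∧ j + l ≤ i + t ∧ OccA W l j := by
    intro l d
    induction d with
    | zero => intro _ h; simpa using h
    | succ d ih =>
      rintro hd ⟨j, hj, hjl, ho⟩
      rcases Nat.lt_or_ge (j + l) (i + t + (d + 1)) with h' | h'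
      · exact ih (by omega) ⟨j, hj, by omega, ho⟩
      · have hlm : l < i + t + (d + 1) := by omega
        have hocc' : OccA W l (i + t + (d + 1) - l) := by
          rw [show i + t + (d + 1) - l = j from by omega]
          exact ho
        obtain ⟨j', hj', hj'm, ho'⟩ :=
          open_elim W hlm hocc' (hO (i + t + (d + 1)) (by omega) (by omega))
        exact ih (by omega) ⟨j', hj', by omega, ho'⟩
  have h7a : V ≤ B + 1 := by
    by_contra hgt
    push_neg at hgt
    have hocc : OccA W (V - 1) (i + t + s + 1 - V) := occ_mono W (by omega) hVocc
    obtain ⟨j, hj, hjl, ho⟩ := chain (V - 1) s le_rfl ⟨i + t + s + 1 - V, by omega, by omega, hocc⟩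
    have hoB : OccA W B j := occ_mono W (by omega) ho
    have := uniB j hj (by omega) hoB
    omega
  have h7b : B + 1 ≤ V := by
    by_contra hgt
    push_neg at hgt
    have hoV : OccA W V P := occ_mono W (by omega) OccB
    have := hVuni P (by omega) (by omega) hoV
    omega
  have hoPs : OccA W B (P + s) := by
    have h0 : OccA W B (i + t + s + 1 - V) := occ_mono W (by omega) hVocc
    rw [show i + t + s + 1 - V = P + s from by omega] at h0
    exact h0
  -- u_n has period s
  have zocc : OccA W (B - s) s := by
    intro k hk
    have h1 := hoPs k (by omega)
    have h2 := OccB (s + k) (by omega)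
    rw [show P + s + k = P + (s + k) from by omega] at h1
    rw [h2] at h1
    exact h1
  -- shifting occurrences down by the period P
  have shift : ∀ f l, OccA W l f → P ≤ f → f + l ≤ i + t → OccA W l (f - P) := by
    intro f l ho hPf hfl k hk
    have h1 : W (P + (f - P + k)) = W (f - P + k) := OccB (f - P + k) (by omega)
    rw [show P + (f - P + k) = f + k from by omega] at h1
    have h2 := ho k hk
    rw [h1] at h2
    exact h2
  -- uniqueness data at i + t - s
  obtain ⟨hblt_s, -, -, huni_s⟩ := hbf (i + t - s) (by omega) (by omega)
  have hbs : bf (i + t - s) = B - s := by have := run s (by omega); omega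
  -- descent: P divides s
  have desc : ∀ f, f ≤ s → OccA W (B - s) f → P ∣ f := by
    intro f
    induction f using Nat.strong_induction_on with
    | _ f ih =>
      intro hf ho
      rcases Nat.eq_zero_or_pos f with rfl | hf0
      · exact dvd_zero P
      rcases le_or_gt f P with hfP | hPf
      · have hocc : OccA W (bf (i + t - s)) f := by rw [hbs]; exact ho
        have := huni_s f hf0 (by omega) hocc
        have hfeq : f = P := by omega
        rw [hfeq]
      · have ho' := shift f (B - s) ho (by omega) (by omega)
        obtain ⟨c, hc⟩ := ih (f - P) (by omega) (by omega) ho'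
        exact ⟨c + 1, by rw [Nat.mul_add, Nat.mul_one]; omega⟩
  obtain ⟨c, hc⟩ := desc s le_rfl zocc
  -- W B = W (B - s) by stepping down by P
  have chainP : ∀ q, q * P ≤ s → W (B - q * P) = W B := by
    intro q
    induction q with
    | zero => simp
    | succ q ih =>
      intro hq
      have hx : q * P + P ≤ s := by rw [Nat.succ_mul] at hq; exact hq
      have h1 : W (P + (B - (q * P + P))) = W (B - (q * P + P)) := OccB _ (by omega)
      rw [show P + (B - (q * P + P)) = B - q * P from by omega] at h1
      calc W (B - (q + 1) * P) = W (B - (q * P + P)) := by rw [Nat.succ_mul]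
      _ = W (B - q * P) := h1.symm
      _ = W B := ih (by omega)
  have hfin1 : W (B - s) = W B := by
    have hcc : c * P = s := by rw [Nat.mul_comm]; omega
    have := chainP c (by omega)
    rw [hcc] at this
    exact this
  have hfin2 : W (i + t) = W (B - s) := by
    have h1 := hoPs (B - s) (by omega)
    rw [show P + s + (B - s) = i + t from by omega] at h1
    exact h1
  exact hne (hfin2.trans hfin1)

lemma pat_len (t s : ℕ) :
    (List.replicate t (1:ℕ) ++ List.replicate s 0 ++ [1]).length = t + s + 1 := by
  simp
  omega

lemma pat_val (t s j : ℕ) (hj : j < t + s + 1) :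
    (List.replicate t (1:ℕ) ++ List.replicate s 0 ++ [1])[j]'(by rw [pat_len]; omega) =
      if j < t then 1 else if j < t + s then 0 else 1 := by
  simp only [List.getElem_append, List.length_append, List.length_replicate,
    List.getElem_replicate]
  split_ifs <;> first
    | rfl
    | omega
    | (exfalso; omega)
    | (simp only [List.getElem_singleton])

lemma getElem_middle (as bs cs : List ℕ) (j : ℕ) (hj : j < bs.length)
    (h : as.length + j < (as ++ bs ++ cs).length) :
    (as ++ bs ++ cs)[as.length + j]'h = bs[j]'hj := by
  rw [List.getElem_append_left (by simp; omega), List.getElem_append_right (by omega)]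
  simp

theorem stmt9' {α : Type*} (s t : ℕ) (hs : 0 < s) (ht : 0 < t) :
    (∀ w : List α,
      (List.replicate t 1 ++ List.replicate s 0 ++ [1]) <:+: ocL w → t ≤ s) ∧
    (∀ w : ℕ → α,
      (∃ i, InfixAt (ocI w) (List.replicate t 1 ++ List.replicate s 0 ++ [1]) i) → t ≤ s) := by
  constructor
  · intro w hinf
    by_contra hts
    push_neg at hts
    obtain ⟨sl, tl, heq⟩ := hinf
    have hocl_len : (ocL w).length = w.length := by simp [ocL]
    have hwlen : sl.length + (t + s + 1) + tl.length = w.length := by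
      have h1 := congrArg List.length heq
      simp only [List.length_append, List.length_replicate, List.length_cons,
        List.length_nil, hocl_len] at h1
      omega
    have hw0 : 0 < w.length := by omega
    set W : ℕ → α := fun k => w.getD k (w[0]'hw0) with hWdef
    have htake : ∀ m, m ≤ w.length → w.take m = prefW W m := by
      intro m hm
      apply List.ext_getElem (by simp [prefW]; omega)
      intro k h1 h2
      have hk : k < m := ((by simpa using h1) : k < m ∧ k < w.length).1
      have hkw : k < w.length := by omega
      rw [List.getElem_take]
      simp only [prefW, List.getElem_map, List.getElem_range, hWdef]
      rw [List.getD_eq_getElem w _ hkw]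
    have hval : ∀ j, j < t + s + 1 →
        (if ClosedWord (w.take (sl.length + j + 1)) then (1:ℕ) else 0) =
        if j < t then 1 else if j < t + s then 0 else 1 := by
      intro j hj
      have hij : sl.length + j < w.length := by omega
      have h2 := getElem_middle sl (List.replicate t 1 ++ List.replicate s 0 ++ [1]) tl j
        (by rw [pat_len]; omega) (by rw [heq, hocl_len]; exact hij)
      have h1 : ((sl ++ (List.replicate t 1 ++ List.replicate s 0 ++ [1]) ++ tl))[sl.length + j]'(by
          rw [heq, hocl_len]; exact hij) = (ocL w)[sl.length + j]'(by rw [hocl_len]; exact hij) :=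
        List.getElem_of_eq heq _
      have h0 : (ocL w)[sl.length + j]'(by rw [hocl_len]; exact hij) =
          if ClosedWord (w.take (sl.length + j + 1)) then (1:ℕ) else 0 := by
        simp [ocL]
      rw [← h0, ← h1, h2]
      exact pat_val t s j hj
    have hC : ∀ m, sl.length + 1 ≤ m → m ≤ sl.length + t → ClosedWord (prefW W m) := by
      intro m h1 h2
      have hv := hval (m - sl.length - 1) (by omega)
      rw [if_pos (show m - sl.length - 1 < t by omega)] at hv
      rw [show sl.length + (m - sl.length - 1) + 1 = m from by omega] at hv
      rw [htake m (by omega)] at hv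
      split_ifs at hv with h
      exact h
    have hOp : ∀ m, sl.length + t + 1 ≤ m → m ≤ sl.length + t + s → ¬ ClosedWord (prefW W m) := by
      intro m h1 h2
      have hv := hval (m - sl.length - 1) (by omega)
      rw [if_neg (show ¬(m - sl.length - 1 < t) by omega),
        if_pos (show m - sl.length - 1 < t + s by omega)] at hv
      rw [show sl.length + (m - sl.length - 1) + 1 = m from by omega] at hv
      rw [htake m (by omega)] at hv
      split_ifs at hv with h
      exact h
    have hNc : ClosedWord (prefW W (sl.length + t + s + 1)) := by
      have hv := hval (t + s) (by omega)
      rw [if_neg (show ¬(t + s < t) by omega), if_neg (show ¬(t + s < t + s) by omega)] at hv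
      rw [show sl.length + (t + s) + 1 = sl.length + t + s + 1 from by omega] at hv
      rw [htake _ (by omega)] at hv
      split_ifs at hv with h
      exact h
    exact core W sl.length t s hs hts hC hOp hNc
  · rintro w ⟨i, hinf⟩
    by_contra hts
    push_neg at hts
    rw [InfixAt] at hinf
    have hval : ∀ j, j < t + s + 1 →
        ocI w (i + j) = if j < t then (1:ℕ) else if j < t + s then 0 else 1 := by
      intro j hj
      have h2 : (List.replicate t 1 ++ List.replicate s 0 ++ [1])[j]'(by rw [pat_len]; omega) =
          ((List.range (List.replicate t (1:ℕ) ++ List.replicate s 0 ++ [1]).length).map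
            fun j => ocI w (i + j))[j]'(by rw [List.length_map, List.length_range, pat_len]; omega) :=
        List.getElem_of_eq hinf _
      rw [pat_val t s j hj] at h2
      simp only [List.getElem_map, List.getElem_range] at h2
      exact h2.symm
    have hC : ∀ m, i + 1 ≤ m → m ≤ i + t → ClosedWord (prefW w m) := by
      intro m h1 h2
      have hv := hval (m - i - 1) (by omega)
      rw [if_pos (show m - i - 1 < t by omega)] at hv
      rw [show i + (m - i - 1) = m - 1 from by omega] at hv
      simp only [ocI] at hv
      rw [show m - 1 + 1 = m from by omega] at hv
      split_ifs at hv with h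
      exact h
    have hOp : ∀ m, i + t + 1 ≤ m → m ≤ i + t + s → ¬ ClosedWord (prefW w m) := by
      intro m h1 h2
      have hv := hval (m - i - 1) (by omega)
      rw [if_neg (show ¬(m - i - 1 < t) by omega),
        if_pos (show m - i - 1 < t + s by omega)] at hv
      rw [show i + (m - i - 1) = m - 1 from by omega] at hv
      simp only [ocI] at hv
      rw [show m - 1 + 1 = m from by omega] at hv
      split_ifs at hv with h
      exact h
    have hNc : ClosedWord (prefW w (i + t + s + 1)) := by
      have hv := hval (t + s) (by omega)
      rw [if_neg (show ¬(t + s < t) by omega), if_neg (show ¬(t + s < t + s) by omega)] at hv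
      simp only [ocI] at hv
      rw [show i + (t + s) + 1 = i + t + s + 1 from by omega] at hv
      split_ifs at hv with h
      exact h
    exact core w i t s hs hts hC hOp hNc

end OCProof

theorem stmt9 {α : Type*} [Fintype α] (s t : ℕ) (hs : 0 < s) (ht : 0 < t) :
    (∀ w : List α,
      (List.replicate t 1 ++ List.replicate s 0 ++ [1]) <:+: ocL w → t ≤ s) ∧
    (∀ w : ℕ → α,
      (∃ i, InfixAt (ocI w) (List.replicate t 1 ++ List.replicate s 0 ++ [1]) i) → t ≤ s) := by
  exact OCProof.stmt9' s t hs ht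
end

section
/- Let w be a right special Sturmian word (a finite word over {a,b} such that both wa and wb are factors of Sturmian words, equivalently are balanced) and let u be its longest repeated prefix. Then u is a suffix of w. -/
open scoped Classical

variable {α : Type*}

lemma bool_eq_of_ne_not {a b : Bool} (h : a ≠ !b) : a = b := by
  cases a <;> cases b <;> simp_all

lemma bool_not_of_ne {a b : Bool} (h : a ≠ b) : a = !b := by
  cases a <;> cases b <;> simp_all

lemma exists_first_diff : ∀ (l₁ l₂ : List Bool), l₁.length = l₂.length → l₁ ≠ l₂ →
    ∃ r c₁ c₂ t₁ t₂, c₁ ≠ c₂ ∧ l₁ = r ++ c₁ :: t₁ ∧ l₂ = r ++ c₂ :: t₂ := by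
  intro l₁
  induction l₁ with
  | nil => intro l₂ hl hne; cases l₂ <;> simp_all
  | cons a t ih =>
    intro l₂ hl hne
    cases l₂ with
    | nil => simp at hl
    | cons b t₂ =>
      by_cases hab : a = b
      · subst hab
        have ht : t ≠ t₂ := fun he => hne (by rw [he])
        obtain ⟨r, c₁, c₂, t₁', t₂', hc, h1, h2⟩ := ih t₂ (by simpa using hl) ht
        exact ⟨a :: r, c₁, c₂, t₁', t₂', hc, by simp [h1], by simp [h2]⟩
      · exact ⟨[], a, b, t, t₂, hab, rfl, rfl⟩

theorem stmt10 (w : List Bool) (h : RightSpecialSturmian w) (u : List Bool)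
    (hu : u <+: w ∧ RepeatedIn u w ∧ ∀ v, v <+: w → RepeatedIn v w → v.length ≤ u.length) :
    u <:+ w := by
  obtain ⟨hpre, hrep, hmax⟩ := hu
  set n := u.length with hn
  obtain ⟨i, j, hij, hoi, hoj⟩ := hrep
  have hjpos : 0 < j := lt_of_le_of_lt (Nat.zero_le i) hij
  have hjn : j + n ≤ w.length := hoj.1
  have hnlt : n < w.length := by
    rcases lt_or_eq_of_le hpre.length_le with hlt | heq
    · exact hlt
    · omega
  set s := w.drop (w.length - n) with hs
  have hslen : s.length = n := by simp [hs]; omega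
  have hssuf : s <:+ w := List.drop_suffix _ _
  by_cases hus : u = s
  · rw [hus]; exact hssuf
  exfalso
  have hu_take : u = w.take n := by
    have := List.prefix_iff_eq_take.mp hpre
    simpa [← hn] using this
  -- step 1 : u ++ [w[n]] is a prefix of w
  have hpx : u ++ [w[n]'hnlt] <+: w := by
    have h1 : w.take (n+1) = w.take n ++ [w[n]'hnlt] := by
      rw [List.take_succ]
      simp [List.getElem?_eq_getElem hnlt]
    have := List.take_prefix (n+1) w
    rw [h1, ← hu_take] at this
    exact this
  -- step 2 : u ++ [w[n]] is not repeated, so no occurrence at positive index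
  have hnr : ¬ RepeatedIn (u ++ [w[n]'hnlt]) w := by
    intro hr
    have := hmax _ hpx hr
    simp at this
    omega
  have hnoocc : ∀ k, 0 < k → ¬ OccurrenceAt (u ++ [w[n]'hnlt]) w k := by
    intro k hk ho
    exact hnr ⟨0, k, hk, ⟨by simp; omega, by simpa using hpx⟩, ho⟩
  -- step 3 : occurrence of u at j is internal (j + n < |w|)
  have hdj : u <+: w.drop j := hoj.2
  have hjnlt : j + n < w.length := by
    rcases lt_or_eq_of_le hjn with hlt | heq
    · exact hlt
    · exfalso
      apply hus
      have hlen : (w.drop j).length = n := by simp; omega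
      have : u = w.drop j := hdj.eq_of_length (by rw [hlen])
      rw [this, hs]
      congr 1
      omega
  -- step 4 : u ++ [w[j+n]] occurs at j
  have hdjlen : n + 1 ≤ (w.drop j).length := by simp; omega
  have hygood : (n : ℕ) < (w.drop j).length := by omega
  have hyocc : u ++ [w[j+n]'hjnlt] <+: w.drop j := by
    have h1 : u = (w.drop j).take n := by
      have := List.prefix_iff_eq_take.mp hdj
      simpa [← hn] using this
    have h2 : (w.drop j).take (n+1) = (w.drop j).take n ++ [(w.drop j)[n]'hygood] := by
      rw [List.take_succ]
      simp [List.getElem?_eq_getElem hygood]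
    have h3 : (w.drop j)[n]'hygood = w[j+n]'hjnlt := by
      simp [List.getElem_drop]
    have := List.take_prefix (n+1) (w.drop j)
    rw [h2, ← h1, h3] at this
    exact this
  -- step 5 : the letter at j+n is the negation of the one at n
  have hne2 : w[j+n]'hjnlt = !(w[n]'hnlt) := by
    by_contra hcon
    have heq : w[j+n]'hjnlt = w[n]'hnlt := bool_eq_of_ne_not hcon
    apply hnoocc j hjpos
    refine ⟨by simp; omega, ?_⟩
    rw [← heq]
    exact hyocc
  -- step 6 : both extensions of u are infixes of w
  have hboth : ∀ z : Bool, u ++ [z] <:+: w := by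
    intro z
    by_cases hz : z = w[n]'hnlt
    · subst hz; exact hpx.isInfix
    · have hz' : z = w[j+n]'hjnlt := by
        rw [hne2]; exact bool_not_of_ne hz
      subst hz'
      exact hyocc.isInfix.trans (List.drop_suffix j w).isInfix
  -- step 7 : find the last differing position of u and s
  obtain ⟨r, c₁, c₂, t₁, t₂, hc, h1, h2⟩ :=
    exists_first_diff u.reverse s.reverse (by simp [hslen, ← hn])
      (fun he => hus (by simpa using congrArg List.reverse he))
  set v := r.reverse with hv
  have hu' : u = t₁.reverse ++ (c₁ :: v) := by
    have := congrArg List.reverse h1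
    simpa [hv] using this
  have hs' : s = t₂.reverse ++ (c₂ :: v) := by
    have := congrArg List.reverse h2
    simpa [hv] using this
  -- step 8 : c₁ :: v ++ [c₁] is an infix of w
  have hA : (c₁ :: v ++ [c₁]) <:+: w := by
    have hsu : (c₁ :: v) ++ [c₁] <:+ u ++ [c₁] := ⟨t₁.reverse, by rw [hu']; simp⟩
    exact hsu.isInfix.trans (hboth c₁)
  -- step 9 : c₂ :: v ++ [c₂] is a suffix of w ++ [c₂]
  have hB : (c₂ :: v ++ [c₂]) <:+ (w ++ [c₂]) := by
    have h4 : (c₂ :: v) <:+ w := List.IsSuffix.trans ⟨t₂.reverse, by rw [hs']⟩ hssuf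
    obtain ⟨p, hp⟩ := h4
    exact ⟨p, by rw [← hp]; simp⟩
  -- step 10 : balance of w ++ [c₂] is violated
  have hbal := h c₂ (c₁ :: v ++ [c₁]) (c₂ :: v ++ [c₂])
    (hA.trans (List.prefix_append w [c₂]).isInfix) hB.isInfix (by simp)
  have hc2 : c₂ = !c₁ := bool_not_of_ne (Ne.symm hc)
  subst hc2
  cases c₁ <;> simp [List.count_cons, List.count_append] at hbal <;> omega
end

section
/- Let w be a right special Sturmian word over {a,b}. Then exactly one of wa and wb is closed (and the other is open). -/
open scoped Classical

variable {α : Type*}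

/-- If a word contains both `true::r++[true]` and `false::r++[false]`, it is not balanced. -/
lemma unbal_aux (v : List Bool) (hb : BalancedWord v) (r : List Bool)
    (h1 : (true :: (r ++ [true])) <:+: v) (h2 : (false :: (r ++ [false])) <:+: v) : False := by
  have hlen : (true :: (r ++ [true])).length = (false :: (r ++ [false])).length := by simp
  have := hb _ _ h1 h2 hlen
  simp [List.count_cons, List.count_append] at this
  omega

/-- Uniqueness of right special words of a given length. -/
lemma rs_unique (w : List Bool) (hbal : ∀ x : Bool, BalancedWord (w ++ [x])) :
    ∀ n (X Y : List Bool), X.length = n → Y.length = n →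
    ((X ++ [false]) <:+: w) → ((X ++ [true]) <:+: w) →
    (∀ x : Bool, (Y ++ [x]) <:+: (w ++ [x])) → X = Y := by
  intro n
  induction n with
  | zero =>
    intro X Y hX hY _ _ _
    rw [List.length_eq_zero_iff] at hX hY
    rw [hX, hY]
  | succ n ih =>
    rintro (_ | ⟨x₀, X'⟩) (_ | ⟨y₀, Y'⟩) hX hY hXf hXt hYx <;> simp at hX hY
    rw [List.cons_append] at hXf hXt
    have hX'f : (X' ++ [false]) <:+: w :=
      ((List.suffix_cons x₀ (X' ++ [false])).isInfix).trans hXf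
    have hX't : (X' ++ [true]) <:+: w :=
      ((List.suffix_cons x₀ (X' ++ [true])).isInfix).trans hXt
    have hY'x : ∀ x : Bool, (Y' ++ [x]) <:+: (w ++ [x]) := by
      intro x
      have := hYx x
      rw [List.cons_append] at this
      exact ((List.suffix_cons y₀ (Y' ++ [x])).isInfix).trans this
    have hE : X' = Y' := ih X' Y' hX hY hX'f hX't hY'x
    subst hE
    by_cases hxy : x₀ = y₀
    · rw [hxy]
    · exfalso
      cases x₀ <;> cases y₀
      · exact hxy rfl
      ·
        have h1 : (true :: (X' ++ [true])) <:+: w ++ [true] := by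
          have := hYx true; rwa [List.cons_append] at this
        have h2 : (false :: (X' ++ [false])) <:+: w ++ [true] :=
          hXf.trans (List.prefix_append w [true]).isInfix
        exact unbal_aux _ (hbal true) X' h1 h2
      ·
        have h1 : (true :: (X' ++ [true])) <:+: w ++ [false] :=
          hXt.trans (List.prefix_append w [false]).isInfix
        have h2 : (false :: (X' ++ [false])) <:+: w ++ [false] := by
          have := hYx false; rwa [List.cons_append] at this
        exact unbal_aux _ (hbal false) X' h1 h2
      · exact hxy rfl

theorem stmt11 (w : List Bool) (hw : w ≠ []) (h : RightSpecialSturmian w) :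
    Xor' (ClosedWord (w ++ [false])) (ClosedWord (w ++ [true])) := by
  classical
  set n := w.length with hn
  have hn1 : 1 ≤ n := List.length_pos_iff.mpr hw
  set P : ℕ → Prop := fun k => w.take k <:+ w with hP
  set K := Nat.findGreatest P (n - 1) with hKdef
  have hP0 : P 0 := by simp [hP]
  have hK : P K := Nat.findGreatest_spec (Nat.zero_le _) hP0
  have hKle : K ≤ n - 1 := Nat.findGreatest_le _
  have hKlt : K < n := lt_of_le_of_lt hKle (by omega)
  have hKmax : ∀ k, k ≤ n - 1 → P k → k ≤ K := by
    intro k hk hpk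
    by_contra hc
    exact Nat.findGreatest_is_greatest (by omega) hk hpk
  -- the letter after the longest border
  set y : Bool := w[K]'hKlt with hy
  -- C1 : w ++ [y] is closed
  have C1 : ClosedWord (w ++ [y]) := by
    refine Or.inr ⟨w.take (K + 1), ⟨?_, ?_, ?_⟩, ?_⟩
    · exact (List.take_prefix _ _).trans (List.prefix_append w [y])
    · -- suffix
      obtain ⟨t, ht⟩ := hK
      have htake : w.take (K + 1) = w.take K ++ [y] := by
        rw [List.take_succ]
        congr 1
        simp [List.getElem?_eq_getElem hKlt, hy]
      refine ⟨t, ?_⟩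
      rw [htake, ← List.append_assoc, ht]
    · intro hcontra
      have := congrArg List.length hcontra
      simp at this
      omega
    · rintro ⟨p, s, hp, hs, he⟩
      set i := p.length with hi
      have hi1 : 1 ≤ i := List.length_pos_iff.mpr hp
      have hlen := congrArg List.length he
      have hs1 : 1 ≤ s.length := List.length_pos_iff.mpr hs
      simp at hlen
      have hiKn : i + (K + 1) ≤ n := by omega
      -- occurrence of the border inside w at position i
      have hocc : (w.drop i).take (K + 1) = w.take (K + 1) := by
        have h1 : (w ++ [y]).drop i = w.take (K + 1) ++ s := by
          rw [he, List.append_assoc, hi]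
          exact List.drop_left
        have h2 : (w ++ [y]).drop i = w.drop i ++ [y] :=
          List.drop_append_of_le_length (by omega)
        have h3 : w.take (K + 1) ++ s = w.drop i ++ [y] := by rw [← h1, h2]
        have h4 : (w.take (K + 1) ++ s).take (K + 1) = w.take (K + 1) :=
          List.take_left' (by simp; omega)
        rw [← h4, h3, List.take_append_of_le_length (by simp; omega)]
      set Q : ℕ → Prop := fun L => (w.drop i).take L = w.take L with hQ
      set L := Nat.findGreatest Q n with hLdef
      have hKL : K + 1 ≤ L := by
        rw [hLdef]
        exact Nat.le_findGreatest (by omega) hocc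
      have hQL : Q L := by
        rw [hLdef]
        exact Nat.findGreatest_spec (show K + 1 ≤ n by omega) hocc
      have hLn : L ≤ n := by
        rw [hLdef]
        exact Nat.findGreatest_le _
      by_cases hcase : n - i ≤ L
      · -- take L is the full suffix drop i : longer border
        have hdl : (w.drop i).length = n - i := by simp [hn]
        have h5 : (w.drop i).take L = w.drop i := List.take_of_length_le (by omega)
        have h6 : w.take L = w.drop i := by rw [← hQL, h5]
        have h7 : L = n - i := by
          have := congrArg List.length h6
          simp at this
          omega
        have hPL : P L := ⟨w.take i, by rw [h6]; exact List.take_append_drop i w⟩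
        have := hKmax L (by omega) hPL
        omega
      · push_neg at hcase
        have hLn' : L < n - i := hcase
        have hnQ : ¬ Q (L + 1) :=
          Nat.findGreatest_is_greatest (P := Q) (n := n) (by omega) (by omega)
        have hLlt : L < n := by omega
        have hiL : i + L < n := by omega
        have hdl : L < (w.drop i).length := by simp; omega
        have hstep1 : (w.drop i).take (L + 1) = w.take L ++ [w[i + L]'hiL] := by
          rw [List.take_succ, hQL]
          congr 1
          rw [List.getElem?_eq_getElem hdl]
          simp [List.getElem_drop]
        have hstep2 : w.take (L + 1) = w.take L ++ [w[L]'hLlt] := by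
          rw [List.take_succ]
          congr 1
          simp [List.getElem?_eq_getElem hLlt]
        have hne' : w[i + L]'hiL ≠ w[L]'hLlt := by
          intro heq
          apply hnQ
          rw [hQ]
          simp only []
          rw [hstep1, hstep2, heq]
        have hnotv : w[i + L]'hiL = !(w[L]'hLlt) := by
          revert hne'
          cases (w[i + L]'hiL) <;> cases (w[L]'hLlt) <;> simp
        -- X = w.take L is right special inside w ; Y = suffix of length L
        have hXext1 : (w.take L ++ [w[L]'hLlt]) <:+: w := by
          rw [← hstep2]
          exact (List.take_prefix _ _).isInfix
        have hXext2 : (w.take L ++ [!(w[L]'hLlt)]) <:+: w := by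
          rw [← hnotv, ← hstep1]
          exact ((List.take_prefix _ _).isInfix).trans (List.drop_suffix i w).isInfix
        have hXf : (w.take L ++ [false]) <:+: w := by
          cases hb : (w[L]'hLlt)
          · rw [hb] at hXext1; exact hXext1
          · rw [hb] at hXext2; simpa using hXext2
        have hXt : (w.take L ++ [true]) <:+: w := by
          cases hb : (w[L]'hLlt)
          · rw [hb] at hXext2; simpa using hXext2
          · rw [hb] at hXext1; exact hXext1
        have hYx : ∀ x : Bool, (w.drop (n - L) ++ [x]) <:+: (w ++ [x]) := by
          intro x
          refine List.IsSuffix.isInfix ⟨w.take (n - L), ?_⟩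
          rw [← List.append_assoc, List.take_append_drop]
        have hXY : w.take L = w.drop (n - L) :=
          rs_unique w h L _ _ (by simp; omega) (by simp; omega) hXf hXt hYx
        have hPL : P L := ⟨w.take (n - L), by rw [hXY]; exact List.take_append_drop _ w⟩
        have := hKmax L (by omega) hPL
        omega
  -- C2 : w ++ [!y] is open
  have C2 : ¬ ClosedWord (w ++ [!y]) := by
    rintro (hnil | ⟨u, ⟨hpre, hsuf, hune⟩, hni⟩)
    · exact absurd (List.append_eq_nil_iff.mp hnil).1 hw
    · rcases eq_or_ne u [] with hu0 | hu0
      · exact hni ⟨w, [!y], hw, by simp, by rw [hu0]; simp⟩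
      · set m := u.length with hm
        have hm1 : 1 ≤ m := List.length_pos_iff.mpr hu0
        have hmn : m ≤ n := by
          have h1 : m ≤ n + 1 := by
            have := hpre.length_le
            simpa using this
          rcases eq_or_lt_of_le h1 with he | hl
          · exact absurd (hpre.eq_of_length (by simpa using he)) hune
          · omega
        set k := m - 1 with hk
        have hmk : m = k + 1 := by omega
        have hkn : k < n := by omega
        have hu : u = w.take (k + 1) := by
          have h1 : u = (w ++ [!y]).take m := List.prefix_iff_eq_take.mp hpre
          rw [h1, List.take_append_of_le_length (by omega), hmk]
        have hsufeq : u = w.drop (n - k) ++ [!y] := by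
          have h1 : u = (w ++ [!y]).drop ((w ++ [!y]).length - m) :=
            List.suffix_iff_eq_drop.mp hsuf
          have h2 : (w ++ [!y]).length - m = n - k := by simp; omega
          rw [h1, h2, List.drop_append_of_le_length (by omega)]
        have hsplit : w.take k ++ [w[k]'hkn] = w.drop (n - k) ++ [!y] := by
          have htk : w.take (k + 1) = w.take k ++ [w[k]'hkn] := by
            rw [List.take_succ]
            congr 1
            simp [List.getElem?_eq_getElem hkn]
          rw [← htk, ← hu, hsufeq]
        obtain ⟨htk, hlast⟩ := List.append_inj' hsplit (by simp)
        have hlast' : w[k]'hkn = !y := by simpa using hlast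
        have hPk : P k := ⟨w.take (n - k), by rw [htk]; exact List.take_append_drop _ w⟩
        have hkK : k ≤ K := hKmax k (by omega) hPk
        have hkKne : k ≠ K := by
          intro heq
          have h1 : w[k]'hkn = y := by
            rw [hy]
            simp only [heq]
          rw [h1] at hlast'
          simp at hlast'
        have hkKlt : k < K := by omega
        -- internal occurrence of u at position q = n - K
        set q := n - K with hq
        have hq1 : 1 ≤ q := by omega
        obtain ⟨t, ht⟩ := hK
        have htlen : t.length = q := by
          have := congrArg List.length ht
          simp at this
          omega
        have hdropq : w.drop q = w.take K := by
          conv_lhs => rw [← ht, ← htlen]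
          rw [List.drop_left]
        have huq : u = (w.drop q).take (k + 1) := by
          rw [hdropq, List.take_take, hu]
          congr 1
          omega
        have hdec : u ++ w.drop (q + (k + 1)) = w.drop q := by
          have h1 : (w.drop q).drop (k + 1) = w.drop (q + (k + 1)) := by
            rw [List.drop_drop]
          rw [huq, ← h1]
          exact List.take_append_drop _ _
        apply hni
        refine ⟨w.take q, w.drop (q + (k + 1)) ++ [!y], ?_, by simp, ?_⟩
        · have hlq : (w.take q).length = q := by simp; omega
          intro hcon
          rw [hcon] at hlq
          simp at hlq
          omega
        · calc w ++ [!y] = (w.take q ++ w.drop q) ++ [!y] := by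
                rw [List.take_append_drop]
            _ = (w.take q ++ (u ++ w.drop (q + (k + 1)))) ++ [!y] := by rw [hdec]
            _ = w.take q ++ u ++ (w.drop (q + (k + 1)) ++ [!y]) := by
                simp [List.append_assoc]
  -- assemble the Xor'
  cases hb : y
  · rw [hb] at C1 C2
    simp only [Bool.not_false] at C2
    exact Or.inl ⟨C1, C2⟩
  · rw [hb] at C1 C2
    simp only [Bool.not_true] at C2
    exact Or.inr ⟨C1, C2⟩
end
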